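/- arXiv:2604.23292 — 5 statements merged into one kernel-verified Lean document; each statement's English description precedes it below -/
import Mathlib

section
/- Let 𝒜 be a real *-subalgebra of M_n(ℂ) and let Π be the orthogonal projection of M_n(ℂ) onto 𝒜 with respect to the real Hilbert–Schmidt inner product. Then (i) Π is positive: Π(B) is positive semidefinite whenever B is positive semidefinite; (ii) Π is real completely positive: for all finite families A_1,…,A_k ∈ 𝒜 and B_1,…,B_k ∈ M_n(ℂ), the matrix ∑_{i,j} A_iᴴ · Π(B_iᴴ B_j) · A_j is positive semidefinite; and (iii) Π is faithful: if B is positive semidefinite and Π(B) = 0, then B = 0. -/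
open Matrix Complex Filter
open scoped ComplexOrder

/-- `Mat n` is the algebra of `n × n` complex matrices. -/
abbrev Mat (n : ℕ) := Matrix (Fin n) (Fin n) ℂ

/-- A real `*`-subalgebra of `M_n(ℂ)`: a real-linear subspace containing the identity,
closed under matrix multiplication and conjugate transpose. -/
def IsRealStarSubalgebra {n : ℕ} (𝒜 : Set (Mat n)) : Prop :=
  (∀ A ∈ 𝒜, ∀ B ∈ 𝒜, A + B ∈ 𝒜) ∧
  (∀ (r : ℝ), ∀ A ∈ 𝒜, r • A ∈ 𝒜) ∧
  (∀ A ∈ 𝒜, ∀ B ∈ 𝒜, A * B ∈ 𝒜) ∧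
  (∀ A ∈ 𝒜, Aᴴ ∈ 𝒜) ∧
  (1 : Mat n) ∈ 𝒜

/-- A real positive map: a real-linear map sending positive semidefinite matrices
to positive semidefinite matrices. -/
def IsRealPositiveMap {n : ℕ} (α : Mat n →ₗ[ℝ] Mat n) : Prop :=
  ∀ B : Mat n, B.PosSemidef → (α B).PosSemidef

/-- A real conditional expectation onto `𝒜`: a real positive map with range in `𝒜`
satisfying the module property `α(AB) = A·α(B)` for `A ∈ 𝒜`. -/
def IsRealCondExp {n : ℕ} (𝒜 : Set (Mat n)) (α : Mat n →ₗ[ℝ] Mat n) : Prop :=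
  IsRealPositiveMap α ∧ (∀ B : Mat n, α B ∈ 𝒜) ∧
  (∀ A ∈ 𝒜, ∀ B : Mat n, α (A * B) = A * α B)

open Polynomial

lemma trace_re_eq (C : Mat n) : ((Cᴴ * C).trace).re = ∑ i, ∑ j, Complex.normSq (C j i) := by
  simp [Matrix.trace, Matrix.diag, Matrix.mul_apply, Matrix.conjTranspose_apply,
    Complex.normSq_apply]

lemma eq_zero_of_trace_re {C : Mat n} (h : ((Cᴴ * C).trace).re = 0) : C = 0 := by
  rw [trace_re_eq] at h
  have h1 : ∀ i ∈ Finset.univ, ∀ j ∈ Finset.univ, Complex.normSq (C j i) = 0 := by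
    have := (Finset.sum_eq_zero_iff_of_nonneg (fun i _ =>
      Finset.sum_nonneg fun j _ => Complex.normSq_nonneg _)).mp h
    intro i _ j _
    exact (Finset.sum_eq_zero_iff_of_nonneg (fun j _ => Complex.normSq_nonneg _)).mp
      (this i (Finset.mem_univ i)) j (Finset.mem_univ j)
  ext j i
  simpa using Complex.normSq_eq_zero.mp (h1 i (Finset.mem_univ i) j (Finset.mem_univ j))

lemma trace_re_nonneg {M : Mat n} (hM : M.PosSemidef) : 0 ≤ (M.trace).re := by
  rw [Matrix.trace]
  rw [Complex.re_sum]
  refine Finset.sum_nonneg fun i _ => ?_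
  have := hM.re_dotProduct_nonneg (Pi.single i 1)
  simpa [dotProduct, Matrix.mulVec, Pi.single_apply] using this

section proj
variable {n : ℕ} {𝒜 : Set (Mat n)} (h𝒜 : IsRealStarSubalgebra 𝒜)
    (P : Mat n →ₗ[ℝ] Mat n)
    (hPmem : ∀ B : Mat n, P B ∈ 𝒜)
    (hPorth : ∀ A ∈ 𝒜, ∀ B : Mat n, ((Aᴴ * (B - P B)).trace).re = 0)

include h𝒜

lemma mem_sub' {A B : Mat n} (hA : A ∈ 𝒜) (hB : B ∈ 𝒜) : A - B ∈ 𝒜 := by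
  have := h𝒜.1 A hA _ (h𝒜.2.1 (-1) B hB)
  simpa [sub_eq_add_neg] using this

include hPmem hPorth

lemma proj_unique {M X : Mat n} (hX : X ∈ 𝒜)
    (h : ∀ A ∈ 𝒜, ((Aᴴ * (M - X)).trace).re = 0) : X = P M := by
  set C := X - P M with hCdef
  have hC : C ∈ 𝒜 := mem_sub' h𝒜 hX (hPmem M)
  have key : ((Cᴴ * C).trace).re = 0 := by
    have h1 := hPorth C hC M
    have h2 := h C hC
    have : Cᴴ * C = Cᴴ * (M - P M) - Cᴴ * (M - X) := by
      rw [← mul_sub]; congr 1; rw [hCdef]; abel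
    rw [this, Matrix.trace_sub, Complex.sub_re, h1, h2, sub_zero]
  have := eq_zero_of_trace_re key
  rw [hCdef, sub_eq_zero] at this
  exact this

lemma proj_fix {A : Mat n} (hA : A ∈ 𝒜) : P A = A :=
  (proj_unique h𝒜 P hPmem hPorth hA (fun B _ => by simp)).symm

lemma proj_star (M : Mat n) : P (Mᴴ) = (P M)ᴴ := by
  refine (proj_unique h𝒜 P hPmem hPorth (h𝒜.2.2.2.1 _ (hPmem M)) ?_).symm
  intro A hA
  have h1 := hPorth Aᴴ (h𝒜.2.2.2.1 _ hA) M
  have : Aᴴ * (Mᴴ - (P M)ᴴ) = ((M - P M) * A)ᴴ := by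
    rw [Matrix.conjTranspose_mul, Matrix.conjTranspose_sub]
  rw [this, Matrix.trace_conjTranspose]
  rw [show ((M - P M) * A).trace = (A * (M - P M)).trace from Matrix.trace_mul_comm _ _]
  simpa [Matrix.conjTranspose_conjTranspose] using h1

lemma proj_conj {A A' : Mat n} (hA : A ∈ 𝒜) (hA' : A' ∈ 𝒜) (M : Mat n) :
    P (A * M * A') = A * P M * A' := by
  refine (proj_unique h𝒜 P hPmem hPorth
    (h𝒜.2.2.1 _ (h𝒜.2.2.1 _ hA _ (hPmem M)) _ hA') ?_).symm
  intro C hC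
  have h1 := hPorth (Aᴴ * C * A'ᴴ)
    (h𝒜.2.2.1 _ (h𝒜.2.2.1 _ (h𝒜.2.2.2.1 _ hA) _ hC) _ (h𝒜.2.2.2.1 _ hA')) M
  have e1 : Cᴴ * (A * M * A' - A * P M * A') = Cᴴ * A * (M - P M) * A' := by
    noncomm_ring
  have e2 : ((Aᴴ * C * A'ᴴ)ᴴ * (M - P M)).trace = (Cᴴ * A * (M - P M) * A').trace := by
    have e3 : (Aᴴ * C * A'ᴴ)ᴴ * (M - P M) = A' * (Cᴴ * A * (M - P M)) := by
      simp only [Matrix.conjTranspose_mul, Matrix.conjTranspose_conjTranspose]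
      noncomm_ring
    rw [e3, Matrix.trace_mul_comm]
  rw [e1, ← e2]
  exact h1

end proj

section poly
variable {n : ℕ} {𝒜 : Set (Mat n)} (h𝒜 : IsRealStarSubalgebra 𝒜)
include h𝒜

lemma pow_mem' {H : Mat n} (hH : H ∈ 𝒜) (k : ℕ) : H ^ k ∈ 𝒜 := by
  induction k with
  | zero => simpa using h𝒜.2.2.2.2
  | succ k ih => rw [pow_succ]; exact h𝒜.2.2.1 _ ih _ hH

lemma aeval_mem {H : Mat n} (hH : H ∈ 𝒜) (p : Polynomial ℝ) :
    Polynomial.aeval H p ∈ 𝒜 := by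
  induction p using Polynomial.induction_on' with
  | add p q hp hq => rw [map_add]; exact h𝒜.1 _ hp _ hq
  | monomial k a =>
      rw [Polynomial.aeval_monomial]
      have : (algebraMap ℝ (Mat n)) a * H ^ k = a • H ^ k := by
        rw [Algebra.algebraMap_eq_smul_one, smul_mul_assoc, one_mul]
      rw [this]
      exact h𝒜.2.1 _ _ (pow_mem' h𝒜 hH k)

end poly

/-- Conjugation by a unitary as an ℝ-algebra homomorphism. -/
noncomputable def conjAlgHom {n : ℕ} (U : Matrix.unitaryGroup (Fin n) ℂ) : Mat n →ₐ[ℝ] Mat n where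
  toFun M := (U : Mat n) * M * star (U : Mat n)
  map_one' := by
    show (U : Mat n) * 1 * star (U : Mat n) = 1
    rw [mul_one]
    exact Matrix.mem_unitaryGroup_iff.mp U.2
  map_mul' M N := by
    have h : star (U : Mat n) * (U : Mat n) = 1 := Matrix.mem_unitaryGroup_iff'.mp U.2
    show (U : Mat n) * (M * N) * star (U : Mat n)
      = ((U : Mat n) * M * star (U : Mat n)) * ((U : Mat n) * N * star (U : Mat n))
    calc (U : Mat n) * (M * N) * star (U : Mat n)
        = (U : Mat n) * (M * ((star (U : Mat n) * (U : Mat n)) * (N * star (U : Mat n)))) := by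
          rw [h, one_mul]; noncomm_ring
      _ = ((U : Mat n) * M * star (U : Mat n)) * ((U : Mat n) * N * star (U : Mat n)) := by
          noncomm_ring
  map_zero' := by simp
  map_add' M N := by
    show (U : Mat n) * (M + N) * star (U : Mat n) = _
    noncomm_ring
  commutes' r := by
    show (U : Mat n) * (algebraMap ℝ (Mat n) r) * star (U : Mat n) = algebraMap ℝ (Mat n) r
    rw [Algebra.algebraMap_eq_smul_one (A := Mat n), mul_smul_comm, mul_one, smul_mul_assoc,
      Matrix.mem_unitaryGroup_iff.mp U.2]

section pos
variable {n : ℕ} {𝒜 : Set (Mat n)} (h𝒜 : IsRealStarSubalgebra 𝒜)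
    (P : Mat n →ₗ[ℝ] Mat n)
    (hPmem : ∀ B : Mat n, P B ∈ 𝒜)
    (hPorth : ∀ A ∈ 𝒜, ∀ B : Mat n, ((Aᴴ * (B - P B)).trace).re = 0)
include h𝒜 hPmem hPorth

open scoped MatrixOrder in
lemma proj_pos {B : Mat n} (hB : B.PosSemidef) : (P B).PosSemidef := by
  classical
  have hHmem : P B ∈ 𝒜 := hPmem B
  have hHerm : (P B).IsHermitian := by
    have h1 := proj_star h𝒜 P hPmem hPorth B
    rw [hB.isHermitian.eq] at h1
    exact h1.symm
  set U := hHerm.eigenvectorUnitary with hU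
  set lam := hHerm.eigenvalues with hlam
  set g : ℝ → ℝ := fun t => max (-t) 0 with hg
  set s : Finset ℝ := Finset.image lam Finset.univ with hs
  set p : Polynomial ℝ := Lagrange.interpolate s id g with hp
  have hpeval : ∀ i, p.eval (lam i) = g (lam i) := fun i => by
    have := Lagrange.eval_interpolate_at_node g (Set.injOn_id _)
      (Finset.mem_image_of_mem lam (Finset.mem_univ i))
    simpa [hp] using this
  set D : Mat n := Matrix.diagonal (RCLike.ofReal ∘ lam) with hD
  set Dg : Mat n := Matrix.diagonal (fun i => ((g (lam i) : ℝ) : ℂ)) with hDg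
  have hspec : P B = (U : Mat n) * D * star (U : Mat n) := hHerm.spectral_theorem
  set Q : Mat n := (U : Mat n) * Dg * star (U : Mat n) with hQ
  have hQeq : Polynomial.aeval (P B) p = Q := by
    have h1 : (conjAlgHom U) D = P B := hspec.symm
    rw [← h1, Polynomial.aeval_algHom_apply]
    have h2 : Polynomial.aeval D p = Dg := by
      have h3 : D = Matrix.diagonalAlgHom ℝ (RCLike.ofReal ∘ lam) := rfl
      rw [h3, Polynomial.aeval_algHom_apply]
      have h4 : Polynomial.aeval (RCLike.ofReal ∘ lam : Fin n → ℂ) p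
          = fun i => ((g (lam i) : ℝ) : ℂ) := by
        funext i
        have h5 := Polynomial.aeval_algHom_apply
          (Pi.evalAlgHom ℝ (fun _ : Fin n => ℂ) i) (RCLike.ofReal ∘ lam) p
        have h6 : (Polynomial.aeval (RCLike.ofReal ∘ lam : Fin n → ℂ) p) i
            = Polynomial.aeval ((lam i : ℝ) : ℂ) p := h5.symm
        rw [h6, show ((lam i : ℝ) : ℂ) = algebraMap ℝ ℂ (lam i) from rfl,
          Polynomial.aeval_algebraMap_apply]
        simp [hpeval i]
      rw [h4]
      rfl
    rw [h2]
    rfl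
  have hQmem : Q ∈ 𝒜 := hQeq ▸ aeval_mem h𝒜 hHmem p
  have hDgpsd : Dg.PosSemidef := Matrix.PosSemidef.diagonal fun i =>
    Complex.zero_le_real.mpr (le_max_right _ _)
  have hQpsd : Q.PosSemidef := by
    have := hDgpsd.mul_mul_conjTranspose_same (U : Mat n)
    rwa [← Matrix.star_eq_conjTranspose] at this
  have hQH : ((Q * P B).trace) = ((∑ i, g (lam i) * lam i : ℝ) : ℂ) := by
    rw [hspec]
    have h1 : Q * ((U : Mat n) * D * star (U : Mat n))
        = (U : Mat n) * (Dg * D) * star (U : Mat n) := (map_mul (conjAlgHom U) Dg D).symm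
    rw [h1, Matrix.trace_mul_cycle, Matrix.mem_unitaryGroup_iff'.mp U.2, one_mul, hDg, hD,
      Matrix.diagonal_mul_diagonal, Matrix.trace_diagonal]
    push_cast
    rfl
  have htrace_nonneg : 0 ≤ ((Q * B).trace).re := by
    have h1 : (Q * B).trace = ((CFC.sqrt Q) * B * (CFC.sqrt Q)).trace := by
      conv_lhs => rw [← CFC.sqrt_mul_sqrt_self Q (Matrix.nonneg_iff_posSemidef.mpr hQpsd)]
      exact (Matrix.trace_mul_cycle (CFC.sqrt Q) B (CFC.sqrt Q)).symm
    have h2 : ((CFC.sqrt Q) * B * (CFC.sqrt Q)).PosSemidef := by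
      have := hB.conjTranspose_mul_mul_same (CFC.sqrt Q)
      rwa [(CFC.sqrt_nonneg Q).posSemidef.isHermitian.eq] at this
    rw [h1]
    exact trace_re_nonneg h2
  have horth := hPorth Q hQmem B
  have hQBQH : ((Q * B).trace).re = ((Q * P B).trace).re := by
    have h1 : Qᴴ * (B - P B) = Q * B - Q * P B := by
      rw [hQpsd.isHermitian.eq, mul_sub]
    rw [h1, Matrix.trace_sub, Complex.sub_re] at horth
    linarith
  have hsum : 0 ≤ ∑ i, g (lam i) * lam i := by
    rw [hQBQH, hQH] at htrace_nonneg
    simpa using htrace_nonneg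
  have hterm : ∀ i, g (lam i) * lam i ≤ 0 := fun i => by
    rcases le_or_gt 0 (lam i) with h | h
    · rw [hg]; simp only [max_eq_right (neg_nonpos.mpr h)]; simp
    · rw [hg]; simp only [max_eq_left (neg_pos.mpr h).le]; nlinarith
  have hs0 : ∑ i, g (lam i) * lam i = 0 :=
    le_antisymm (Finset.sum_nonpos fun i _ => hterm i) hsum
  have hall : ∀ i, 0 ≤ lam i := by
    intro i
    by_contra hneg
    push_neg at hneg
    have h0 := (Finset.sum_eq_zero_iff_of_nonpos fun i _ => hterm i).mp hs0 i (Finset.mem_univ i)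
    have : g (lam i) = -lam i := by rw [hg]; exact max_eq_left (neg_pos.mpr hneg).le
    rw [this] at h0
    nlinarith
  exact (Matrix.IsHermitian.posSemidef_iff_eigenvalues_nonneg hHerm).mpr hall

end pos

/-- The orthogonal projection onto a real `*`-subalgebra with respect to
the real Hilbert–Schmidt inner product is (i) positive, (ii) real completely positive,
and (iii) faithful. -/
theorem stmt2 {n : ℕ} (𝒜 : Set (Mat n)) (h𝒜 : IsRealStarSubalgebra 𝒜)
    (P : Mat n →ₗ[ℝ] Mat n)
    (hPmem : ∀ B : Mat n, P B ∈ 𝒜)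
    (hPorth : ∀ A ∈ 𝒜, ∀ B : Mat n, ((Aᴴ * (B - P B)).trace).re = 0) :
    (∀ B : Mat n, B.PosSemidef → (P B).PosSemidef) ∧
    (∀ (k : ℕ) (A B : Fin k → Mat n), (∀ i, A i ∈ 𝒜) →
      (∑ i, ∑ j, (A i)ᴴ * P ((B i)ᴴ * B j) * (A j)).PosSemidef) ∧
    (∀ B : Mat n, B.PosSemidef → P B = 0 → B = 0) := by
  refine ⟨fun B hB => proj_pos h𝒜 P hPmem hPorth hB, ?_, ?_⟩
  · intro k A B hA
    have key : ∀ i j, (A i)ᴴ * P ((B i)ᴴ * B j) * (A j)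
        = P ((A i)ᴴ * ((B i)ᴴ * B j) * A j) :=
      fun i j => (proj_conj h𝒜 P hPmem hPorth (h𝒜.2.2.2.1 _ (hA i)) (hA j) _).symm
    simp_rw [key, ← map_sum]
    have hM : ∑ i, ∑ j, (A i)ᴴ * ((B i)ᴴ * B j) * A j
        = (∑ i, B i * A i)ᴴ * (∑ i, B i * A i) := by
      rw [Matrix.conjTranspose_sum, Finset.sum_mul]
      refine Finset.sum_congr rfl fun i _ => ?_
      rw [Finset.mul_sum]
      refine Finset.sum_congr rfl fun j _ => ?_
      simp only [Matrix.conjTranspose_mul]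
      noncomm_ring
    rw [hM]
    exact proj_pos h𝒜 P hPmem hPorth (Matrix.posSemidef_conjTranspose_mul_self _)
  · intro B hB hPB
    have h1 := hPorth 1 h𝒜.2.2.2.2 B
    rw [hPB] at h1
    simp only [Matrix.conjTranspose_one, one_mul, sub_zero] at h1
    open scoped MatrixOrder in
    obtain ⟨C, rfl⟩ : ∃ C : Mat n, B = Cᴴ * C := ⟨CFC.sqrt B, by
      rw [(CFC.sqrt_nonneg B).posSemidef.isHermitian.eq,
        CFC.sqrt_mul_sqrt_self B (Matrix.nonneg_iff_posSemidef.mpr hB)]⟩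
    rw [eq_zero_of_trace_re h1]
    simp
end

section
/- Let ρ ∈ M_n(ℂ) be positive definite, let 𝒜 be a real *-subalgebra of M_n(ℂ), let Π be the orthogonal projection of M_n(ℂ) onto 𝒜 with respect to the real Hilbert–Schmidt inner product, and set ρ₀ := Π(ρ). Then the following are equivalent: (i) there exists a real conditional expectation α onto 𝒜 such that Re Tr(ρ B) = Re Tr(ρ α(B)) for all B ∈ M_n(ℂ); (ii) ρ₀ is positive definite (in particular invertible) and ρ A ρ⁻¹ = ρ₀ A ρ₀⁻¹ for every A ∈ 𝒜; (iii) ρ A ρ⁻¹ ∈ 𝒜 for every A ∈ 𝒜. -/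
open Matrix Complex Filter
open scoped ComplexOrder

namespace Stmt5Aux

variable {n : ℕ}

/-! ### Basic trace lemmas -/

lemma retr_ctm_nonneg (X : Mat n) : 0 ≤ ((Xᴴ * X).trace).re := by
  have h : (Xᴴ * X).trace = ((∑ j, ∑ i, Complex.normSq (X i j) : ℝ) : ℂ) := by
    simp only [Matrix.trace, Matrix.diag, Matrix.mul_apply, Matrix.conjTranspose_apply]
    push_cast
    refine Finset.sum_congr rfl fun j _ => Finset.sum_congr rfl fun i _ => ?_
    rw [Complex.star_def, Complex.normSq_eq_conj_mul_self]
  rw [h, Complex.ofReal_re]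
  exact Finset.sum_nonneg fun j _ => Finset.sum_nonneg fun i _ => Complex.normSq_nonneg _

lemma eq_zero_of_retr_ctm (X : Mat n) (h : ((Xᴴ * X).trace).re = 0) : X = 0 := by
  have h2 : (Xᴴ * X).trace = ((∑ j, ∑ i, Complex.normSq (X i j) : ℝ) : ℂ) := by
    simp only [Matrix.trace, Matrix.diag, Matrix.mul_apply, Matrix.conjTranspose_apply]
    push_cast
    refine Finset.sum_congr rfl fun j _ => Finset.sum_congr rfl fun i _ => ?_
    rw [Complex.star_def, Complex.normSq_eq_conj_mul_self]
  rw [h2, Complex.ofReal_re] at h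
  have hz : ∀ j ∈ (Finset.univ : Finset (Fin n)), ∀ i ∈ (Finset.univ : Finset (Fin n)),
      Complex.normSq (X i j) = 0 := by
    intro j _
    have hj : ∀ j ∈ (Finset.univ : Finset (Fin n)),
        0 ≤ ∑ i, Complex.normSq (X i j) := by
      intro j _; exact Finset.sum_nonneg fun i _ => Complex.normSq_nonneg _
    have := (Finset.sum_eq_zero_iff_of_nonneg hj).mp h j (Finset.mem_univ j)
    intro i _
    exact (Finset.sum_eq_zero_iff_of_nonneg (fun i _ => Complex.normSq_nonneg _)).mp this i
      (Finset.mem_univ i)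
  ext i j
  simpa using Complex.normSq_eq_zero.mp (hz j (Finset.mem_univ j) i (Finset.mem_univ i))

lemma conj_trace_eq (M : Mat n) : star M.trace = (Mᴴ).trace := (Matrix.trace_conjTranspose M).symm

lemma retr_skew_herm (S H : Mat n) (hS : Sᴴ = -S) (hH : Hᴴ = H) : ((S * H).trace).re = 0 := by
  have h1 : star ((S * H).trace) = -((S * H).trace) := by
    rw [conj_trace_eq, Matrix.conjTranspose_mul, hS, hH, Matrix.mul_neg, Matrix.trace_neg,
      Matrix.trace_mul_comm]
  have h2 := congrArg Complex.re h1
  simp only [Complex.neg_re] at h2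
  have h3 : (star ((S * H).trace)).re = ((S * H).trace).re := Complex.conj_re _
  linarith [h3.symm.trans h2]

lemma trace_mul_vecMulVec (M : Mat n) (v : Fin n → ℂ) :
    (M * Matrix.vecMulVec v (star v)).trace = star v ⬝ᵥ (M *ᵥ v) := by
  simp only [Matrix.trace, Matrix.diag, Matrix.mul_apply, Matrix.vecMulVec_apply,
    dotProduct, Matrix.mulVec, Pi.star_apply]
  refine Finset.sum_congr rfl fun i _ => ?_
  rw [Finset.mul_sum]
  refine Finset.sum_congr rfl fun j _ => by ring

lemma vecMulVec_posSemidef (v : Fin n → ℂ) : (Matrix.vecMulVec v (star v)).PosSemidef := by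
  refine Matrix.PosSemidef.of_dotProduct_mulVec_nonneg ?_ ?_
  · ext i j
    simp [Matrix.vecMulVec_apply, Matrix.conjTranspose_apply, mul_comm]
  · intro x
    have h1 : (Matrix.vecMulVec v (star v)) *ᵥ x = (star v ⬝ᵥ x) • v := by
      ext i
      simp [Matrix.mulVec, Matrix.vecMulVec_apply, dotProduct, Finset.mul_sum,
        mul_assoc, mul_comm, mul_left_comm]
    rw [h1]
    have h3 : star (star v ⬝ᵥ x) = star x ⬝ᵥ v := by
      simp only [dotProduct, Pi.star_apply, star_sum, star_mul', star_star]
      exact Finset.sum_congr rfl fun i _ => by ring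
    have h2 : star x ⬝ᵥ ((star v ⬝ᵥ x) • v) = star (star v ⬝ᵥ x) * (star v ⬝ᵥ x) := by
      rw [dotProduct_smul, h3, smul_eq_mul, mul_comm]
    rw [h2]
    exact star_mul_self_nonneg _

lemma psd_diag_re_nonneg {M : Mat n} (hM : M.PosSemidef) (i : Fin n) : 0 ≤ (M i i).re := by
  have h := hM.dotProduct_mulVec_nonneg (Pi.single i 1)
  have h2 : star (Pi.single i (1:ℂ)) ⬝ᵥ (M *ᵥ Pi.single i 1) = M i i := by
    simp [Matrix.mulVec_single, dotProduct, Pi.single_apply, Pi.star_apply, apply_ite, ite_mul]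
  rw [h2] at h
  exact (Complex.le_def.mp h).1

lemma psd_trace_re_nonneg {M : Mat n} (hM : M.PosSemidef) : 0 ≤ (M.trace).re := by
  rw [Matrix.trace]
  rw [Complex.re_sum]
  exact Finset.sum_nonneg fun i _ => psd_diag_re_nonneg hM i

open scoped MatrixOrder in
lemma psd_mul_trace_re_nonneg {Q R : Mat n} (hQ : Q.PosSemidef) (hR : R.PosSemidef) :
    0 ≤ ((Q * R).trace).re := by
  have h1 : Q * R = CFC.sqrt Q * (CFC.sqrt Q * R) := by rw [← Matrix.mul_assoc, CFC.sqrt_mul_sqrt_self Q hQ.nonneg]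
  rw [h1, Matrix.trace_mul_comm]
  have h2 : CFC.sqrt Q * R * CFC.sqrt Q = (CFC.sqrt Q)ᴴ * R * CFC.sqrt Q := by
    rw [(CFC.sqrt_nonneg Q).posSemidef.1]
  have := hR.conjTranspose_mul_mul_same (CFC.sqrt Q)
  apply psd_trace_re_nonneg
  rw [h2]; exact this

/-! ### Functional calculus for Hermitian matrices -/

section fc

variable {K : Mat n} (hK : K.IsHermitian)

/-- Functional calculus: apply `f : ℝ → ℝ` to the eigenvalues of a Hermitian matrix. -/
noncomputable def fc (f : ℝ → ℝ) : Mat n :=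
  (hK.eigenvectorUnitary : Mat n) *
    Matrix.diagonal (fun i => ((f (hK.eigenvalues i) : ℝ) : ℂ)) *
    star (hK.eigenvectorUnitary : Mat n)

lemma eigU_star_mul : star (hK.eigenvectorUnitary : Mat n) * (hK.eigenvectorUnitary : Mat n) = 1 :=
  Matrix.mem_unitaryGroup_iff'.mp hK.eigenvectorUnitary.2

lemma eigU_mul_star : (hK.eigenvectorUnitary : Mat n) * star (hK.eigenvectorUnitary : Mat n) = 1 :=
  Matrix.mem_unitaryGroup_iff.mp hK.eigenvectorUnitary.2

lemma fc_congr {f g : ℝ → ℝ} (h : ∀ i, f (hK.eigenvalues i) = g (hK.eigenvalues i)) :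
    fc hK f = fc hK g := by
  unfold fc
  have h2 : (fun i => ((f (hK.eigenvalues i) : ℝ) : ℂ)) =
      (fun i => ((g (hK.eigenvalues i) : ℝ) : ℂ)) := by
    funext i; rw [h i]
  rw [h2]

lemma fc_herm (f : ℝ → ℝ) : (fc hK f)ᴴ = fc hK f := by
  unfold fc
  rw [Matrix.conjTranspose_mul, Matrix.conjTranspose_mul, Matrix.diagonal_conjTranspose,
    ← Matrix.star_eq_conjTranspose (star (hK.eigenvectorUnitary : Mat n)), star_star,
    ← Matrix.star_eq_conjTranspose (hK.eigenvectorUnitary : Mat n), ← Matrix.mul_assoc]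
  have h2 : star (fun i => ((f (hK.eigenvalues i) : ℝ) : ℂ)) =
      (fun i => ((f (hK.eigenvalues i) : ℝ) : ℂ)) := by
    funext i; simp [Pi.star_apply, Complex.star_def, Complex.conj_ofReal]
  rw [h2]

lemma fc_mul (f g : ℝ → ℝ) : fc hK f * fc hK g = fc hK (fun x => f x * g x) := by
  unfold fc
  have h1 : ∀ M : Mat n, star (hK.eigenvectorUnitary : Mat n) *
      ((hK.eigenvectorUnitary : Mat n) * M) = M := by
    intro M; rw [← Matrix.mul_assoc, eigU_star_mul, Matrix.one_mul]
  simp only [Matrix.mul_assoc, h1]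
  rw [← Matrix.mul_assoc (Matrix.diagonal _) (Matrix.diagonal _), Matrix.diagonal_mul_diagonal]
  congr 2
  ext i
  push_cast
  ring

lemma fc_add (f g : ℝ → ℝ) : fc hK f + fc hK g = fc hK (fun x => f x + g x) := by
  unfold fc
  rw [← Matrix.add_mul, ← Matrix.mul_add, Matrix.diagonal_add]
  have h2 : (fun i => ((f (hK.eigenvalues i) : ℝ) : ℂ) + ((g (hK.eigenvalues i) : ℝ) : ℂ)) =
      (fun i => (((fun x => f x + g x) (hK.eigenvalues i) : ℝ) : ℂ)) := by
    funext i; push_cast; ring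
  rw [h2]

lemma fc_smul (c : ℝ) (f : ℝ → ℝ) : c • fc hK f = fc hK (fun x => c * f x) := by
  unfold fc
  have hD : Matrix.diagonal (fun i => (((fun x => c * f x) (hK.eigenvalues i) : ℝ) : ℂ))
      = c • Matrix.diagonal (fun i => ((f (hK.eigenvalues i) : ℝ) : ℂ)) := by
    have h2 : (fun i => (((fun x => c * f x) (hK.eigenvalues i) : ℝ) : ℂ))
        = c • (fun i => ((f (hK.eigenvalues i) : ℝ) : ℂ)) := by
      funext i
      simp only [Pi.smul_apply, Complex.real_smul]
      push_cast
      ring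
    rw [h2, Matrix.diagonal_smul]
  rw [hD, Matrix.mul_smul, Matrix.smul_mul]

lemma fc_one : fc hK (fun _ => 1) = 1 := by
  unfold fc
  simp only [Complex.ofReal_one, Matrix.diagonal_one, Matrix.mul_one]
  exact eigU_mul_star hK

lemma fc_zero : fc hK (fun _ => 0) = 0 := by
  unfold fc
  simp

lemma fc_id : fc hK (fun x => x) = K := by
  unfold fc
  conv_rhs => rw [hK.spectral_theorem]
  rfl

lemma fc_trace (f : ℝ → ℝ) : (fc hK f).trace = ((∑ i, f (hK.eigenvalues i) : ℝ) : ℂ) := by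
  unfold fc
  rw [Matrix.trace_mul_comm, ← Matrix.mul_assoc, eigU_star_mul, Matrix.one_mul,
    Matrix.trace_diagonal]
  push_cast
  rfl

lemma fc_posSemidef (f : ℝ → ℝ) (h : ∀ i, 0 ≤ f (hK.eigenvalues i)) :
    (fc hK f).PosSemidef := by
  have hd : (Matrix.diagonal (fun i => ((f (hK.eigenvalues i) : ℝ) : ℂ))).PosSemidef := by
    rw [Matrix.posSemidef_diagonal_iff]
    intro i
    rw [Complex.zero_le_real]
    exact h i
  have h2 := hd.mul_mul_conjTranspose_same (hK.eigenvectorUnitary : Mat n)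
  rw [← Matrix.star_eq_conjTranspose] at h2
  exact h2

lemma fc_eigval_zero (f : ℝ → ℝ) (h : fc hK f = 0) : ∀ i, f (hK.eigenvalues i) = 0 := by
  intro i
  have h2 : Matrix.diagonal (fun i => ((f (hK.eigenvalues i) : ℝ) : ℂ)) = 0 := by
    have h3 : star (hK.eigenvectorUnitary : Mat n) * (fc hK f) * (hK.eigenvectorUnitary : Mat n)
        = Matrix.diagonal (fun i => ((f (hK.eigenvalues i) : ℝ) : ℂ)) := by
      unfold fc
      calc star (hK.eigenvectorUnitary : Mat n) *
            ((hK.eigenvectorUnitary : Mat n) *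
              Matrix.diagonal (fun i => ((f (hK.eigenvalues i) : ℝ) : ℂ)) *
              star (hK.eigenvectorUnitary : Mat n)) * (hK.eigenvectorUnitary : Mat n)
          = (star (hK.eigenvectorUnitary : Mat n) * (hK.eigenvectorUnitary : Mat n)) *
              Matrix.diagonal (fun i => ((f (hK.eigenvalues i) : ℝ) : ℂ)) *
              (star (hK.eigenvectorUnitary : Mat n) * (hK.eigenvectorUnitary : Mat n)) := by
            simp only [Matrix.mul_assoc]
        _ = Matrix.diagonal (fun i => ((f (hK.eigenvalues i) : ℝ) : ℂ)) := by
            rw [eigU_star_mul hK, Matrix.one_mul, Matrix.mul_one]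
    rw [← h3, h, Matrix.mul_zero, Matrix.zero_mul]
  have := congrFun (congrFun h2 i) i
  simpa using this

end fc

section fc2

variable {K : Mat n} (hK : K.IsHermitian)

lemma fc_posDef (f : ℝ → ℝ) (h : ∀ i, 0 < f (hK.eigenvalues i)) : (fc hK f).PosDef := by
  refine Matrix.PosDef.of_dotProduct_mulVec_pos ?_ ?_
  · exact fc_herm hK f
  · intro x hx
    set U : Mat n := (hK.eigenvectorUnitary : Mat n) with hUdef
    set y : Fin n → ℂ := star U *ᵥ x with hy
    have hy0 : y ≠ 0 := by
      intro h0
      apply hx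
      have : x = U *ᵥ y := by
        rw [hy, Matrix.mulVec_mulVec, eigU_mul_star hK, Matrix.one_mulVec]
      rw [this, h0, Matrix.mulVec_zero]
    have hrw : star x ⬝ᵥ (fc hK f *ᵥ x)
        = star y ⬝ᵥ ((Matrix.diagonal (fun i => ((f (hK.eigenvalues i) : ℝ) : ℂ))) *ᵥ y) := by
      unfold fc
      rw [← Matrix.mulVec_mulVec, ← Matrix.mulVec_mulVec]
      rw [Matrix.dotProduct_mulVec (star x) U]
      congr 1
      rw [hy, Matrix.star_mulVec]
      simp [Matrix.star_eq_conjTranspose]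
    rw [hrw]
    have hd : (Matrix.diagonal (fun i => ((f (hK.eigenvalues i) : ℝ) : ℂ))).PosDef := by
      apply Matrix.PosDef.diagonal
      intro i
      exact Complex.zero_lt_real.mpr (h i)
    exact hd.dotProduct_mulVec_pos hy0

/-- Conjugation by a unitary as an `ℝ`-algebra homomorphism. -/
noncomputable def conjAlgHom (U : Mat n) (h1 : star U * U = 1) (h2 : U * star U = 1) :
    Mat n →ₐ[ℝ] Mat n where
  toFun X := U * X * star U
  map_one' := by show U * 1 * star U = 1; rw [Matrix.mul_one, h2]
  map_mul' X Y := by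
    have h3 : star U * (U * (Y * star U)) = Y * star U := by
      rw [← Matrix.mul_assoc, h1, Matrix.one_mul]
    simp only [Matrix.mul_assoc, h3]
  map_zero' := by show U * 0 * star U = 0; simp
  map_add' X Y := by
    show U * (X + Y) * star U = U * X * star U + U * Y * star U
    rw [Matrix.mul_add, Matrix.add_mul]
  commutes' r := by
    show U * algebraMap ℝ (Mat n) r * star U = algebraMap ℝ (Mat n) r
    rw [← Algebra.commutes r U, Matrix.mul_assoc, h2, Matrix.mul_one]

lemma fc_aeval (p : Polynomial ℝ) :
    Polynomial.aeval K p = fc hK (fun x => Polynomial.eval x p) := by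
  have h1 := eigU_star_mul hK
  have h2 := eigU_mul_star hK
  have hKeq : K = conjAlgHom ((hK.eigenvectorUnitary : Mat n)) h1 h2
      (Matrix.diagonal (RCLike.ofReal ∘ hK.eigenvalues)) := hK.spectral_theorem
  have key := Polynomial.aeval_algHom_apply
    (conjAlgHom ((hK.eigenvectorUnitary : Mat n)) h1 h2)
    (Matrix.diagonal (RCLike.ofReal ∘ hK.eigenvalues) : Mat n) p
  rw [← hKeq] at key
  rw [key]
  have hdiag : Polynomial.aeval (Matrix.diagonal (RCLike.ofReal ∘ hK.eigenvalues) : Mat n) p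
      = Matrix.diagonal (fun i => ((Polynomial.eval (hK.eigenvalues i) p : ℝ) : ℂ)) := by
    have e1 : (Matrix.diagonal (RCLike.ofReal ∘ hK.eigenvalues) : Mat n)
        = Matrix.diagonalAlgHom ℝ (RCLike.ofReal ∘ hK.eigenvalues) := rfl
    rw [e1, Polynomial.aeval_algHom_apply]
    have e2 : (Polynomial.aeval (RCLike.ofReal ∘ hK.eigenvalues : Fin n → ℂ) p)
        = fun i => ((Polynomial.eval (hK.eigenvalues i) p : ℝ) : ℂ) := by
      funext i
      have e3 : (Polynomial.aeval (RCLike.ofReal ∘ hK.eigenvalues : Fin n → ℂ) p) i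
          = Polynomial.aeval ((RCLike.ofReal ∘ hK.eigenvalues : Fin n → ℂ) i) p :=
        (Polynomial.aeval_algHom_apply (Pi.evalAlgHom ℝ (fun _ : Fin n => ℂ) i) _ p).symm
      rw [e3]
      have e4 : ((RCLike.ofReal ∘ hK.eigenvalues : Fin n → ℂ) i)
          = algebraMap ℝ ℂ (hK.eigenvalues i) := rfl
      rw [e4, Polynomial.aeval_algebraMap_apply_eq_algebraMap_eval]
      rfl
    rw [e2]
    rfl
  rw [hdiag]
  rfl

lemma fc_eq_aeval (f : ℝ → ℝ) : ∃ p : Polynomial ℝ, fc hK f = Polynomial.aeval K p := by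
  classical
  set s : Finset ℝ := Finset.image hK.eigenvalues Finset.univ with hs
  refine ⟨Lagrange.interpolate s id f, ?_⟩
  rw [fc_aeval hK]
  apply fc_congr hK
  intro i
  have hmem : hK.eigenvalues i ∈ s := Finset.mem_image_of_mem _ (Finset.mem_univ i)
  exact (Lagrange.eval_interpolate_at_node f (Set.injOn_id _) hmem).symm

lemma fc_commute {X : Mat n} (hX : X * K = K * X) (f : ℝ → ℝ) :
    X * fc hK f = fc hK f * X := by
  obtain ⟨p, hp⟩ := fc_eq_aeval hK f
  rw [hp]
  have : Commute X (Polynomial.aeval K p) := by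
    rw [Polynomial.aeval_eq_sum_range]
    apply Commute.sum_right
    intro i _
    exact (Commute.pow_right hX i).smul_right _
  exact this

end fc2


section alg

variable {𝒜 : Set (Mat n)} (h𝒜 : IsRealStarSubalgebra 𝒜)
include h𝒜

lemma mem_one : (1 : Mat n) ∈ 𝒜 := h𝒜.2.2.2.2
lemma mem_add {A B : Mat n} (hA : A ∈ 𝒜) (hB : B ∈ 𝒜) : A + B ∈ 𝒜 := h𝒜.1 A hA B hB
lemma mem_smul (r : ℝ) {A : Mat n} (hA : A ∈ 𝒜) : r • A ∈ 𝒜 := h𝒜.2.1 r A hA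
lemma mem_mul {A B : Mat n} (hA : A ∈ 𝒜) (hB : B ∈ 𝒜) : A * B ∈ 𝒜 := h𝒜.2.2.1 A hA B hB
lemma mem_star {A : Mat n} (hA : A ∈ 𝒜) : Aᴴ ∈ 𝒜 := h𝒜.2.2.2.1 A hA

lemma mem_zero : (0 : Mat n) ∈ 𝒜 := by
  have := mem_smul h𝒜 0 (mem_one h𝒜); simpa using this

lemma mem_neg {A : Mat n} (hA : A ∈ 𝒜) : -A ∈ 𝒜 := by
  have := mem_smul h𝒜 (-1) hA; simpa using this

lemma mem_sub {A B : Mat n} (hA : A ∈ 𝒜) (hB : B ∈ 𝒜) : A - B ∈ 𝒜 := by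
  have := mem_add h𝒜 hA (mem_neg h𝒜 hB); simpa [sub_eq_add_neg] using this

lemma mem_sum {ι : Type*} {s : Finset ι} {f : ι → Mat n} (h : ∀ i ∈ s, f i ∈ 𝒜) :
    (∑ i ∈ s, f i) ∈ 𝒜 := by
  classical
  induction s using Finset.induction_on with
  | empty => simpa using mem_zero h𝒜
  | insert _ _ hnot ih =>
    rw [Finset.sum_insert hnot]
    exact mem_add h𝒜 (h _ (Finset.mem_insert_self _ _))
      (ih fun i hi => h i (Finset.mem_insert_of_mem hi))

lemma mem_pow {A : Mat n} (hA : A ∈ 𝒜) (k : ℕ) : A ^ k ∈ 𝒜 := by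
  induction k with
  | zero => simpa using mem_one h𝒜
  | succ k ih => rw [pow_succ]; exact mem_mul h𝒜 ih hA

lemma mem_aeval {K : Mat n} (hKA : K ∈ 𝒜) (p : Polynomial ℝ) :
    (Polynomial.aeval K p : Mat n) ∈ 𝒜 := by
  rw [Polynomial.aeval_eq_sum_range]
  exact mem_sum h𝒜 fun i _ => mem_smul h𝒜 _ (mem_pow h𝒜 hKA i)

lemma fc_mem {K : Mat n} (hK : K.IsHermitian) (hKA : K ∈ 𝒜) (f : ℝ → ℝ) : fc hK f ∈ 𝒜 := by
  obtain ⟨p, hp⟩ := fc_eq_aeval hK f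
  rw [hp]
  exact mem_aeval h𝒜 hKA p

end alg

lemma eq_zero_of_trace_posDef_ctm {ρ : Mat n} (hρ : ρ.PosDef) {Z : Mat n}
    (h : ((ρ * (Zᴴ * Z)).trace).re = 0) : Z = 0 := by
  set R := fc hρ.1 Real.sqrt with hRdef
  have hRherm : Rᴴ = R := fc_herm _ _
  have hRR : R * R = ρ := by
    rw [hRdef, fc_mul, fc_congr hρ.1 (g := fun x => x)
      (fun i => Real.mul_self_sqrt (hρ.eigenvalues_pos i).le), fc_id]
  have hRinv : R * fc hρ.1 (fun x => (Real.sqrt x)⁻¹) = 1 := by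
    rw [hRdef, fc_mul, fc_congr hρ.1 (g := fun _ => 1)
      (fun i => mul_inv_cancel₀ (Real.sqrt_ne_zero'.mpr (hρ.eigenvalues_pos i))), fc_one]
  have e1 : (Z * R)ᴴ * (Z * R) = (R * (Zᴴ * Z)) * R := by
    rw [Matrix.conjTranspose_mul, hRherm]
    simp only [Matrix.mul_assoc]
  have e2 : (((Z * R)ᴴ * (Z * R)).trace) = ((ρ * (Zᴴ * Z)).trace) := by
    rw [e1, Matrix.trace_mul_comm, ← Matrix.mul_assoc, hRR]
  have hZR : Z * R = 0 := eq_zero_of_retr_ctm _ (by rw [e2]; exact h)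
  calc Z = Z * (R * fc hρ.1 (fun x => (Real.sqrt x)⁻¹)) := by rw [hRinv, Matrix.mul_one]
    _ = (Z * R) * fc hρ.1 (fun x => (Real.sqrt x)⁻¹) := by rw [Matrix.mul_assoc]
    _ = 0 := by rw [hZR, Matrix.zero_mul]

section Pproj

variable {𝒜 : Set (Mat n)} (h𝒜 : IsRealStarSubalgebra 𝒜)
variable (P : Mat n →ₗ[ℝ] Mat n) (hPmem : ∀ B : Mat n, P B ∈ 𝒜)
variable (hPorth : ∀ A ∈ 𝒜, ∀ B : Mat n, ((Aᴴ * (B - P B)).trace).re = 0)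

lemma retr_ct_ct (A M : Mat n) : ((Aᴴ * Mᴴ).trace).re = ((A * M).trace).re := by
  have h1 : Aᴴ * Mᴴ = (M * A)ᴴ := (Matrix.conjTranspose_mul M A).symm
  rw [h1, ← conj_trace_eq, Complex.star_def, Complex.conj_re, Matrix.trace_mul_comm]

include h𝒜 hPmem hPorth

lemma P_fix {B : Mat n} (hB : B ∈ 𝒜) : P B = B := by
  have hX : B - P B ∈ 𝒜 := mem_sub h𝒜 hB (hPmem B)
  have h := hPorth _ hX B
  have h0 : B - P B = 0 := eq_zero_of_retr_ctm _ h
  exact (sub_eq_zero.mp h0).symm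

lemma P_eq_of {X Y : Mat n} (hY : Y ∈ 𝒜)
    (h : ∀ A ∈ 𝒜, ((Aᴴ * (X - Y)).trace).re = 0) : P X = Y := by
  have hW : P X - Y ∈ 𝒜 := mem_sub h𝒜 (hPmem X) hY
  have h1 := hPorth _ hW X
  have h2 := h _ hW
  have h3 : (P X - Y)ᴴ * (P X - Y)
      = (P X - Y)ᴴ * (X - Y) - (P X - Y)ᴴ * (X - P X) := by
    rw [← Matrix.mul_sub]
    congr 1
    abel
  have h4 : (((P X - Y)ᴴ * (P X - Y)).trace).re = 0 := by
    rw [h3, Matrix.trace_sub, Complex.sub_re, h1, h2]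
    ring
  have := eq_zero_of_retr_ctm _ h4
  rw [sub_eq_zero] at this
  exact this

lemma P_star (X : Mat n) : (P X)ᴴ = P (Xᴴ) := by
  refine (P_eq_of h𝒜 P hPmem hPorth (mem_star h𝒜 (hPmem X)) ?_).symm
  intro A hA
  have h1 : Xᴴ - (P X)ᴴ = (X - P X)ᴴ := (Matrix.conjTranspose_sub X (P X)).symm
  rw [h1, retr_ct_ct]
  have h2 := hPorth _ (mem_star h𝒜 hA) X
  rwa [Matrix.conjTranspose_conjTranspose] at h2

lemma P_mul {A : Mat n} (hA : A ∈ 𝒜) (X : Mat n) : P (A * X) = A * P X := by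
  refine P_eq_of h𝒜 P hPmem hPorth (mem_mul h𝒜 hA (hPmem X)) ?_
  intro C hC
  have h1 : A * X - A * P X = A * (X - P X) := (Matrix.mul_sub A X (P X)).symm
  rw [h1, ← Matrix.mul_assoc]
  have h2 : Cᴴ * A = (Aᴴ * C)ᴴ := by rw [Matrix.conjTranspose_mul, Matrix.conjTranspose_conjTranspose]
  rw [h2]
  exact hPorth _ (mem_mul h𝒜 (mem_star h𝒜 hA) hC) X

lemma P_orth' {C : Mat n} (hC : C ∈ 𝒜) (X : Mat n) : ((C * (X - P X)).trace).re = 0 := by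
  have h := hPorth _ (mem_star h𝒜 hC) X
  rwa [Matrix.conjTranspose_conjTranspose] at h

lemma P_swap {C : Mat n} (hC : C ∈ 𝒜) (X : Mat n) :
    ((C * X).trace).re = ((C * P X).trace).re := by
  have h := P_orth' h𝒜 P hPmem hPorth hC X
  rw [Matrix.mul_sub, Matrix.trace_sub, Complex.sub_re] at h
  linarith

lemma P_pos {X : Mat n} (hX : X.PosSemidef) : (P X).PosSemidef := by
  have hherm : (P X).IsHermitian := by
    show (P X)ᴴ = P X
    rw [P_star h𝒜 P hPmem hPorth, show Xᴴ = X from hX.1]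
  set f : ℝ → ℝ := fun x => max (-x) 0 with hf
  set N2 : Mat n := fc hherm (fun x => f x * f x) with hN2
  have hN2mem : N2 ∈ 𝒜 := fc_mem h𝒜 hherm (hPmem X) _
  have hN2psd : N2.PosSemidef := fc_posSemidef _ _ (fun i => mul_nonneg (le_max_right _ _) (le_max_right _ _))
  have s1 : 0 ≤ ((N2 * X).trace).re := psd_mul_trace_re_nonneg hN2psd hX
  have s2 : ((N2 * X).trace).re = ((N2 * P X).trace).re :=
    P_swap h𝒜 P hPmem hPorth hN2mem X
  have s3 : N2 * P X = fc hherm (fun x => f x * f x * x) := by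
    have h5 := fc_mul hherm (fun x => f x * f x) (fun x => x)
    rw [fc_id hherm] at h5
    exact h5
  have s4 : ((N2 * P X).trace).re
      = ∑ i, f (hherm.eigenvalues i) * f (hherm.eigenvalues i) * hherm.eigenvalues i := by
    rw [s3, fc_trace, Complex.ofReal_re]
  have s5 : ∀ i, f (hherm.eigenvalues i) * f (hherm.eigenvalues i) * hherm.eigenvalues i ≤ 0 := by
    intro i
    rcases le_or_gt 0 (hherm.eigenvalues i) with h|h
    · have hfz : f (hherm.eigenvalues i) = 0 := max_eq_right (neg_nonpos.mpr h)
      simp [hfz]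
    · have : f (hherm.eigenvalues i) = -(hherm.eigenvalues i) :=
        max_eq_left (by linarith)
      rw [this]; nlinarith
  have s6 : ∑ i, f (hherm.eigenvalues i) * f (hherm.eigenvalues i) * hherm.eigenvalues i = 0 := by
    refine le_antisymm (Finset.sum_nonpos fun i _ => s5 i) ?_
    rw [← s4, ← s2]; exact s1
  have s7 : ∀ i, 0 ≤ hherm.eigenvalues i := by
    intro i
    by_contra hneg
    push_neg at hneg
    have hz := (Finset.sum_eq_zero_iff_of_nonpos (fun i _ => s5 i)).mp s6 i (Finset.mem_univ i)
    have hfv : f (hherm.eigenvalues i) = -(hherm.eigenvalues i) := max_eq_left (by linarith)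
    rw [hfv] at hz
    have h4 : hherm.eigenvalues i * hherm.eigenvalues i * hherm.eigenvalues i = 0 := by
      linear_combination hz
    have hll : 0 < hherm.eigenvalues i * hherm.eigenvalues i :=
      mul_pos_of_neg_of_neg hneg hneg
    exact absurd h4 (ne_of_lt (mul_neg_of_pos_of_neg hll hneg))
  exact hherm.posSemidef_iff_eigenvalues_nonneg.mpr s7

lemma P_rho_posDef {ρ : Mat n} (hρ : ρ.PosDef) : (P ρ).PosDef := by
  have hpsd : (P ρ).PosSemidef := P_pos h𝒜 P hPmem hPorth hρ.posSemidef
  have hherm : (P ρ).IsHermitian := hpsd.1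
  set g : ℝ → ℝ := fun x => if x ≤ 0 then 1 else 0 with hg
  set q : Mat n := fc hherm g with hq
  have hqmem : q ∈ 𝒜 := fc_mem h𝒜 hherm (hPmem ρ) _
  have hqherm : qᴴ = q := fc_herm _ _
  have hq2 : qᴴ * q = q := by
    rw [hqherm, hq, fc_mul]
    apply fc_congr
    intro i
    by_cases h : hherm.eigenvalues i ≤ 0 <;> simp [hg, h]
  have heignn : ∀ i, 0 ≤ hherm.eigenvalues i := fun i => hpsd.eigenvalues_nonneg i
  have hqK : q * P ρ = 0 := by
    have h5 := fc_mul hherm g (fun x => x)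
    rw [fc_id hherm] at h5
    rw [hq, h5, fc_congr hherm (g := fun _ => 0) ?_, fc_zero]
    intro i
    by_cases h : hherm.eigenvalues i ≤ 0
    · have h6 : hherm.eigenvalues i = 0 := le_antisymm h (heignn i)
      simp [hg, h6]
    · simp [hg, h]
  have h1 : ((q * ρ).trace).re = 0 := by
    have h2 := P_swap h𝒜 P hPmem hPorth hqmem ρ
    rw [hqK] at h2
    simpa using h2
  have h3 : ((ρ * (qᴴ * q)).trace).re = 0 := by
    rw [hq2, Matrix.trace_mul_comm]; exact h1
  have hq0 : q = 0 := eq_zero_of_trace_posDef_ctm hρ h3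
  have heig : ∀ i, 0 < hherm.eigenvalues i := by
    intro i
    have hz := fc_eigval_zero hherm g hq0 i
    by_contra hc
    push_neg at hc
    rw [hg] at hz
    simp only [if_pos hc] at hz
    exact one_ne_zero hz
  have hPid : P ρ = fc hherm (fun x => x) := (fc_id hherm).symm
  rw [hPid]
  exact fc_posDef hherm _ heig

lemma P_E1 (ρ X : Mat n) : ((ρ * P X).trace).re = ((P ρ * X).trace).re := by
  have h1 : ((ρ * P X).trace).re = ((P X * ρ).trace).re := by rw [Matrix.trace_mul_comm]
  have h2 := P_swap h𝒜 P hPmem hPorth (hPmem X) ρ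
  have h3 : ((P X * P ρ).trace).re = ((P ρ * P X).trace).re := by rw [Matrix.trace_mul_comm]
  have h4 := (P_swap h𝒜 P hPmem hPorth (hPmem ρ) X).symm
  rw [h1, h2, h3, h4]

end Pproj

section posdefK

variable {K : Mat n} (hK : K.PosDef)

lemma fc_sqrt_mul_sqrt : fc hK.1 Real.sqrt * fc hK.1 Real.sqrt = K := by
  rw [fc_mul, fc_congr hK.1 (g := fun x => x)
    (fun i => Real.mul_self_sqrt (hK.eigenvalues_pos i).le), fc_id]

lemma fc_sqrt_mul_isqrt : fc hK.1 Real.sqrt * fc hK.1 (fun x => (Real.sqrt x)⁻¹) = 1 := by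
  rw [fc_mul, fc_congr hK.1 (g := fun _ => 1)
    (fun i => mul_inv_cancel₀ (Real.sqrt_ne_zero'.mpr (hK.eigenvalues_pos i))), fc_one]

lemma fc_isqrt_mul_sqrt : fc hK.1 (fun x => (Real.sqrt x)⁻¹) * fc hK.1 Real.sqrt = 1 := by
  rw [fc_mul, fc_congr hK.1 (g := fun _ => 1)
    (fun i => inv_mul_cancel₀ (Real.sqrt_ne_zero'.mpr (hK.eigenvalues_pos i))), fc_one]

lemma fc_isqrt_mul_isqrt :
    fc hK.1 (fun x => (Real.sqrt x)⁻¹) * fc hK.1 (fun x => (Real.sqrt x)⁻¹)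
      = fc hK.1 (fun x => x⁻¹) := by
  rw [fc_mul]
  apply fc_congr
  intro i
  rw [← mul_inv, Real.mul_self_sqrt (hK.eigenvalues_pos i).le]

lemma fc_K_mul_inv : K * fc hK.1 (fun x => x⁻¹) = 1 := by
  have h := fc_mul hK.1 (fun x => x) (fun x => x⁻¹)
  rw [fc_id] at h
  rw [h, fc_congr hK.1 (g := fun _ => 1)
    (fun i => mul_inv_cancel₀ (hK.eigenvalues_pos i).ne'), fc_one]

lemma fc_inv_mul_K : fc hK.1 (fun x => x⁻¹) * K = 1 := by
  have h := fc_mul hK.1 (fun x => x⁻¹) (fun x => x)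
  rw [fc_id] at h
  rw [h, fc_congr hK.1 (g := fun _ => 1)
    (fun i => inv_mul_cancel₀ (hK.eigenvalues_pos i).ne'), fc_one]

lemma inv_eq_fc : K⁻¹ = fc hK.1 (fun x => x⁻¹) :=
  Matrix.inv_eq_right_inv (fc_K_mul_inv hK)

end posdefK

lemma cyc_cancel {σ : Mat n} (hσ : IsUnit σ.det) (A B : Mat n) :
    (σ * (B * (σ * A * σ⁻¹))).trace = (σ * (A * B)).trace := by
  have e1 : σ * (B * (σ * A * σ⁻¹)) = (σ * B * σ * A) * σ⁻¹ := by
    simp only [Matrix.mul_assoc]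
  rw [e1, Matrix.trace_mul_comm]
  have e2 : σ⁻¹ * (σ * B * σ * A) = (σ⁻¹ * σ) * (B * (σ * A)) := by
    simp only [Matrix.mul_assoc]
  rw [e2, Matrix.nonsing_inv_mul σ hσ, Matrix.one_mul, Matrix.trace_mul_comm]
  congr 1
  simp only [Matrix.mul_assoc]

section main

variable {ρ : Mat n} (hρ : ρ.PosDef) {𝒜 : Set (Mat n)} (h𝒜 : IsRealStarSubalgebra 𝒜)
variable (P : Mat n →ₗ[ℝ] Mat n) (hPmem : ∀ B : Mat n, P B ∈ 𝒜)
variable (hPorth : ∀ A ∈ 𝒜, ∀ B : Mat n, ((Aᴴ * (B - P B)).trace).re = 0)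

include hρ h𝒜 hPmem hPorth

lemma Pρ_inv_mem : (P ρ)⁻¹ ∈ 𝒜 := by
  have hpd0 : (P ρ).PosDef := P_rho_posDef h𝒜 P hPmem hPorth hρ
  rw [inv_eq_fc hpd0]
  exact fc_mem h𝒜 hpd0.1 (hPmem ρ) _

lemma impl_iii_to_ii (h3 : ∀ A ∈ 𝒜, ρ * A * ρ⁻¹ ∈ 𝒜) :
    ∀ A ∈ 𝒜, ρ * A * ρ⁻¹ = (P ρ) * A * (P ρ)⁻¹ := by
  intro A hA
  have hpd0 : (P ρ).PosDef := P_rho_posDef h𝒜 P hPmem hPorth hρ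
  have hmem0 : (P ρ) ∈ 𝒜 := hPmem ρ
  have hinvmem : (P ρ)⁻¹ ∈ 𝒜 := Pρ_inv_mem hρ h𝒜 P hPmem hPorth
  have hZ1 : ρ * A * ρ⁻¹ ∈ 𝒜 := h3 A hA
  have hZ2 : (P ρ) * A * (P ρ)⁻¹ ∈ 𝒜 := mem_mul h𝒜 (mem_mul h𝒜 hmem0 hA) hinvmem
  have hZmem : ρ * A * ρ⁻¹ - (P ρ) * A * (P ρ)⁻¹ ∈ 𝒜 := mem_sub h𝒜 hZ1 hZ2
  set Z := ρ * A * ρ⁻¹ - (P ρ) * A * (P ρ)⁻¹ with hZdef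
  have hdρ : IsUnit ρ.det := (Matrix.isUnit_iff_isUnit_det ρ).mp hρ.isUnit
  have hd0 : IsUnit (P ρ).det := (Matrix.isUnit_iff_isUnit_det _).mp hpd0.isUnit
  have key : ∀ B ∈ 𝒜, ((ρ * (B * Z)).trace).re = 0 := by
    intro B hB
    have c1 : ((ρ * (B * (ρ * A * ρ⁻¹))).trace).re = ((ρ * (A * B)).trace).re := by
      rw [cyc_cancel hdρ]
    have c2 : ((ρ * (A * B)).trace).re = (((P ρ) * (A * B)).trace).re := by
      rw [Matrix.trace_mul_comm, Matrix.trace_mul_comm (P ρ)]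
      exact P_swap h𝒜 P hPmem hPorth (mem_mul h𝒜 hA hB) ρ
    have c3 : (((P ρ) * (A * B)).trace).re
        = (((P ρ) * (B * ((P ρ) * A * (P ρ)⁻¹))).trace).re := by
      rw [cyc_cancel hd0]
    have c4 : (((P ρ) * (B * ((P ρ) * A * (P ρ)⁻¹))).trace).re
        = ((ρ * (B * ((P ρ) * A * (P ρ)⁻¹))).trace).re := by
      rw [Matrix.trace_mul_comm, Matrix.trace_mul_comm ρ]
      exact (P_swap h𝒜 P hPmem hPorth (mem_mul h𝒜 hB hZ2) ρ).symm
    have lin : ((ρ * (B * Z)).trace).re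
        = ((ρ * (B * (ρ * A * ρ⁻¹))).trace).re
          - ((ρ * (B * ((P ρ) * A * (P ρ)⁻¹))).trace).re := by
      rw [hZdef, Matrix.mul_sub B, Matrix.mul_sub ρ, Matrix.trace_sub, Complex.sub_re]
    rw [lin, c1, c2, c3, c4]
    ring
  have hfin := key _ (mem_star h𝒜 hZmem)
  have hZ0 : Z = 0 := eq_zero_of_trace_posDef_ctm hρ hfin
  rw [hZdef] at hZ0
  exact sub_eq_zero.mp hZ0

lemma impl_ii_to_iii (h2 : ∀ A ∈ 𝒜, ρ * A * ρ⁻¹ = (P ρ) * A * (P ρ)⁻¹) :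
    ∀ A ∈ 𝒜, ρ * A * ρ⁻¹ ∈ 𝒜 := by
  intro A hA
  rw [h2 A hA]
  exact mem_mul h𝒜 (mem_mul h𝒜 (hPmem ρ) hA) (Pρ_inv_mem hρ h𝒜 P hPmem hPorth)

end main

lemma fc_sub {K : Mat n} (hK : K.IsHermitian) (f g : ℝ → ℝ) :
    fc hK f - fc hK g = fc hK (fun x => f x - g x) := by
  have h1 : fc hK f - fc hK g = fc hK f + (-1 : ℝ) • fc hK g := by
    rw [sub_eq_add_neg, neg_one_smul]
  rw [h1, fc_smul, fc_add]
  apply fc_congr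
  intro i
  ring

lemma fc_sum {K : Mat n} (hK : K.IsHermitian) {ι : Type*} (s : Finset ι) (g : ι → ℝ → ℝ) :
    (∑ c ∈ s, fc hK (g c)) = fc hK (fun x => ∑ c ∈ s, g c x) := by
  classical
  induction s using Finset.induction_on with
  | empty => simp only [Finset.sum_empty]; exact (fc_zero hK).symm
  | insert _ _ hnot ih =>
    rw [Finset.sum_insert hnot, ih, fc_add]
    apply fc_congr
    intro i
    rw [Finset.sum_insert hnot]

lemma fc_sqrt_mul_sqrt_psd {K : Mat n} (hK : K.PosSemidef) :
    fc hK.1 Real.sqrt * fc hK.1 Real.sqrt = K := by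
  rw [fc_mul, fc_congr hK.1 (g := fun x => x)
    (fun i => Real.mul_self_sqrt (hK.eigenvalues_nonneg i)), fc_id]

lemma posDef_conj {σ : Mat n} (hσ : σ.PosDef) {C : Mat n} (hC : IsUnit C) :
    (Cᴴ * σ * C).PosDef := by
  refine Matrix.PosDef.of_dotProduct_mulVec_pos ?_ ?_
  · exact Matrix.isHermitian_conjTranspose_mul_mul C hσ.1
  · intro x hx
    have hinj := Matrix.mulVec_injective_iff_isUnit.mpr hC
    have hCx : C *ᵥ x ≠ 0 := by
      intro h0
      exact hx (hinj (by rw [h0, Matrix.mulVec_zero]))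
    have := hσ.dotProduct_mulVec_pos hCx
    simpa only [Matrix.star_mulVec, Matrix.dotProduct_mulVec, Matrix.vecMul_vecMul] using this

lemma block_comm {p F : Mat n} (hp2 : p * p = p) (hpH : pᴴ = p) (hFH : Fᴴ = F)
    (hM : (p * F + F * p).PosSemidef) : p * F = F * p := by
  set M := p * F + F * p with hMdef
  set q : Mat n := 1 - p with hq
  have hqp : q * p = 0 := by rw [hq, Matrix.sub_mul, Matrix.one_mul, hp2, sub_self]
  have hpq : p * q = 0 := by rw [hq, Matrix.mul_sub, Matrix.mul_one, hp2, sub_self]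
  set R := fc hM.1 Real.sqrt with hR
  have hRherm : Rᴴ = R := fc_herm _ _
  have hRR : R * R = M := fc_sqrt_mul_sqrt_psd hM
  have hqMq : q * M * q = 0 := by
    rw [hMdef, Matrix.mul_add, Matrix.add_mul]
    have e1 : q * (p * F) * q = 0 := by
      rw [← Matrix.mul_assoc, hqp, Matrix.zero_mul, Matrix.zero_mul]
    have e2 : q * (F * p) * q = 0 := by
      rw [Matrix.mul_assoc, Matrix.mul_assoc, hpq, Matrix.mul_zero, Matrix.mul_zero]
    rw [e1, e2, add_zero]
  have hRq : R * q = 0 := by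
    apply eq_zero_of_retr_ctm
    have e3 : (R * q)ᴴ * (R * q) = q * M * q := by
      rw [Matrix.conjTranspose_mul, hRherm]
      have hqherm : qᴴ = q := by rw [hq, Matrix.conjTranspose_sub, Matrix.conjTranspose_one, hpH]
      rw [hqherm]
      calc q * R * (R * q) = q * (R * R) * q := by simp only [Matrix.mul_assoc]
        _ = q * M * q := by rw [hRR]
    rw [e3, hqMq]
    simp
  have hMq : M * q = 0 := by
    calc M * q = R * (R * q) := by rw [← Matrix.mul_assoc, hRR]
      _ = 0 := by rw [hRq, Matrix.mul_zero]
  have hpFq : p * F * q = 0 := by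
    have e4 : p * (M * q) = 0 := by rw [hMq, Matrix.mul_zero]
    have e5 : p * (M * q) = p * F * q := by
      rw [hMdef]
      calc p * ((p * F + F * p) * q) = p * p * F * q + p * F * (p * q) := by
            rw [Matrix.add_mul, Matrix.mul_add]
            simp only [Matrix.mul_assoc]
        _ = p * F * q := by rw [hp2, hpq, Matrix.mul_zero, add_zero]
    rw [← e5, e4]
  have hpFp : p * F = p * F * p := by
    have e6 : p * F * q = p * F - p * F * p := by
      rw [hq, Matrix.mul_sub, Matrix.mul_one]
    rw [e6] at hpFq
    exact sub_eq_zero.mp hpFq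
  have e8 : F * p = p * F * p := by
    calc F * p = (p * F)ᴴ := by rw [Matrix.conjTranspose_mul, hpH, hFH]
      _ = (p * F * p)ᴴ := by rw [← hpFp]
      _ = p * F * p := by
          rw [Matrix.conjTranspose_mul, Matrix.conjTranspose_mul, hpH, hFH,
            ← Matrix.mul_assoc]
  rw [hpFp, e8]


section main2

variable {ρ : Mat n} (hρ : ρ.PosDef) {𝒜 : Set (Mat n)} (h𝒜 : IsRealStarSubalgebra 𝒜)
variable (P : Mat n →ₗ[ℝ] Mat n) (hPmem : ∀ B : Mat n, P B ∈ 𝒜)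
variable (hPorth : ∀ A ∈ 𝒜, ∀ B : Mat n, ((Aᴴ * (B - P B)).trace).re = 0)

include hρ h𝒜 hPmem hPorth

lemma impl_ii_to_i (h2 : ∀ A ∈ 𝒜, ρ * A * ρ⁻¹ = (P ρ) * A * (P ρ)⁻¹) :
    ∃ α : Mat n →ₗ[ℝ] Mat n, IsRealCondExp 𝒜 α ∧
      ∀ B : Mat n, ((ρ * B).trace).re = ((ρ * α B).trace).re := by
  classical
  have hpd0 : (P ρ).PosDef := P_rho_posDef h𝒜 P hPmem hPorth hρ
  have hmem0 : (P ρ) ∈ 𝒜 := hPmem ρ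
  have hd0 : IsUnit (P ρ).det := (Matrix.isUnit_iff_isUnit_det _).mp hpd0.isUnit
  have hdρ : IsUnit ρ.det := (Matrix.isUnit_iff_isUnit_det _).mp hρ.isUnit
  -- commutation: (P ρ)⁻¹ * ρ commutes with 𝒜
  have hMcomm : ∀ A ∈ 𝒜, ((P ρ)⁻¹ * ρ) * A = A * ((P ρ)⁻¹ * ρ) := by
    intro A hA
    have h3 := h2 A hA
    have h4 : ρ * A = (P ρ) * A * (P ρ)⁻¹ * ρ := by
      have := congrArg (fun X => X * ρ) h3
      simpa only [Matrix.mul_assoc, Matrix.nonsing_inv_mul ρ hdρ, Matrix.mul_one] using this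
    have h5 := congrArg (fun X => (P ρ)⁻¹ * X) h4
    simp only [← Matrix.mul_assoc] at h5
    rw [Matrix.nonsing_inv_mul _ hd0, Matrix.one_mul] at h5
    simp only [Matrix.mul_assoc] at h5 ⊢
    exact h5
  -- ρ commutes with P ρ
  have hcommρ : ρ * (P ρ) = (P ρ) * ρ := by
    have h3 := h2 (P ρ) hmem0
    have h4 : (P ρ) * (P ρ) * (P ρ)⁻¹ = P ρ := by
      rw [Matrix.mul_assoc, Matrix.mul_nonsing_inv _ hd0, Matrix.mul_one]
    rw [h4] at h3
    have h5 := congrArg (fun X => X * ρ) h3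
    simpa only [Matrix.mul_assoc, Matrix.nonsing_inv_mul ρ hdρ, Matrix.mul_one] using h5
  set t : Mat n := fc hpd0.1 (fun x => (Real.sqrt x)⁻¹) with htdef
  have htherm : tᴴ = t := fc_herm _ _
  have htmem : t ∈ 𝒜 := fc_mem h𝒜 hpd0.1 hmem0 _
  have hts : t * fc hpd0.1 Real.sqrt = 1 := fc_isqrt_mul_sqrt hpd0
  have hst : fc hpd0.1 Real.sqrt * t = 1 := fc_sqrt_mul_isqrt hpd0
  have htunit : IsUnit t := ⟨⟨t, fc hpd0.1 Real.sqrt, hts, hst⟩, rfl⟩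
  have htt : t * t = (P ρ)⁻¹ := by
    rw [htdef, fc_isqrt_mul_isqrt hpd0, ← inv_eq_fc hpd0]
  have hρt : ρ * t = t * ρ := fc_commute hpd0.1 hcommρ _
  have hF : ((P ρ)⁻¹ * ρ).PosDef := by
    have h6 : tᴴ * ρ * t = (P ρ)⁻¹ * ρ := by
      rw [htherm, Matrix.mul_assoc, hρt, ← Matrix.mul_assoc, htt]
    rw [← h6]
    exact posDef_conj hρ htunit
  set F : Mat n := (P ρ)⁻¹ * ρ with hFdef
  set w : Mat n := fc hF.1 Real.sqrt with hwdef
  have hwherm : wᴴ = w := fc_herm _ _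
  have hww : w * w = F := fc_sqrt_mul_sqrt hF
  have hwcomm : ∀ A ∈ 𝒜, A * w = w * A := by
    intro A hA
    exact fc_commute hF.1 (hMcomm A hA).symm _
  have hwρ0w : w * (P ρ) * w = ρ := by
    have h7 : w * (P ρ) = (P ρ) * w := (hwcomm _ hmem0).symm
    rw [h7, Matrix.mul_assoc, hww, hFdef, ← Matrix.mul_assoc,
      Matrix.mul_nonsing_inv _ hd0, Matrix.one_mul]
  refine ⟨{ toFun := fun B => P (w * B * w),
            map_add' := ?_, map_smul' := ?_ }, ⟨?_, ?_, ?_⟩, ?_⟩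
  · intro B C
    show P (w * (B + C) * w) = P (w * B * w) + P (w * C * w)
    rw [Matrix.mul_add, Matrix.add_mul, map_add]
  · intro r B
    show P (w * (r • B) * w) = (RingHom.id ℝ) r • P (w * B * w)
    rw [Matrix.mul_smul, Matrix.smul_mul, P.map_smul]
    rfl
  · intro B hB
    simp only [LinearMap.coe_mk, AddHom.coe_mk]
    have h8 : (w * B * w).PosSemidef := by
      have h8a := hB.conjTranspose_mul_mul_same w
      rwa [hwherm] at h8a
    exact P_pos h𝒜 P hPmem hPorth h8
  · intro B
    exact hPmem _
  · intro A hA B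
    simp only [LinearMap.coe_mk, AddHom.coe_mk]
    have h9 : w * (A * B) * w = A * (w * B * w) := by
      rw [← Matrix.mul_assoc w A B, ← hwcomm A hA]
      simp only [Matrix.mul_assoc]
    rw [h9, P_mul h𝒜 P hPmem hPorth hA]
  · intro B
    simp only [LinearMap.coe_mk, AddHom.coe_mk]
    rw [P_E1 h𝒜 P hPmem hPorth ρ (w * B * w)]
    have h10 : ((P ρ) * (w * B * w)).trace = (ρ * B).trace := by
      calc ((P ρ) * (w * B * w)).trace = ((P ρ * w * B) * w).trace := by
            simp only [Matrix.mul_assoc]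
        _ = (w * (P ρ * w * B)).trace := by rw [Matrix.trace_mul_comm]
        _ = ((w * (P ρ) * w) * B).trace := by simp only [Matrix.mul_assoc]
        _ = (ρ * B).trace := by rw [hwρ0w]
    rw [h10]

end main2

lemma trace_pair_conj {M B : Mat n} (hB : Bᴴ = B) :
    ((Mᴴ * B).trace) = star ((M * B).trace) := by
  rw [conj_trace_eq, Matrix.conjTranspose_mul, hB, Matrix.trace_mul_comm]

section main3

variable {ρ : Mat n} (hρ : ρ.PosDef) {𝒜 : Set (Mat n)} (h𝒜 : IsRealStarSubalgebra 𝒜)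
variable (P : Mat n →ₗ[ℝ] Mat n) (hPmem : ∀ B : Mat n, P B ∈ 𝒜)
variable (hPorth : ∀ A ∈ 𝒜, ∀ B : Mat n, ((Aᴴ * (B - P B)).trace).re = 0)

include hρ h𝒜 hPmem hPorth

lemma impl_i_to_ii (α : Mat n →ₗ[ℝ] Mat n)
    (hpos : ∀ B : Mat n, B.PosSemidef → (α B).PosSemidef)
    (hmem : ∀ B : Mat n, α B ∈ 𝒜)
    (hmod : ∀ A ∈ 𝒜, ∀ B : Mat n, α (A * B) = A * α B)
    (hinv : ∀ B : Mat n, ((ρ * B).trace).re = ((ρ * α B).trace).re) :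
    ∀ A ∈ 𝒜, ρ * A * ρ⁻¹ = (P ρ) * A * (P ρ)⁻¹ := by
  classical
  have hpd0 : (P ρ).PosDef := P_rho_posDef h𝒜 P hPmem hPorth hρ
  have hmem0 : (P ρ) ∈ 𝒜 := hPmem ρ
  have hd0 : IsUnit (P ρ).det := (Matrix.isUnit_iff_isUnit_det _).mp hpd0.isUnit
  have hdρ : IsUnit ρ.det := (Matrix.isUnit_iff_isUnit_det _).mp hρ.isUnit
  have hEmem : (P ρ)⁻¹ ∈ 𝒜 := Pρ_inv_mem hρ h𝒜 P hPmem hPorth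
  have hEherm : ((P ρ)⁻¹)ᴴ = (P ρ)⁻¹ := by
    rw [Matrix.conjTranspose_nonsing_inv, hpd0.1.eq]
  have hρherm : ρᴴ = ρ := hρ.1.eq
  have hcancel : ∀ X : Mat n, (P ρ) * ((P ρ)⁻¹ * X) = X := fun X => by
    rw [← Matrix.mul_assoc, Matrix.mul_nonsing_inv _ hd0, Matrix.one_mul]
  -- Step S1 : the key transfer identity
  have S1 : ∀ C ∈ 𝒜, ∀ B : Mat n,
      (((P ρ) * (C * α B)).trace).re = ((ρ * (C * B)).trace).re := by
    intro C hC B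
    have m1 : C * α B ∈ 𝒜 := mem_mul h𝒜 hC (hmem B)
    have c1 : (((P ρ) * (C * α B)).trace).re = ((ρ * (C * α B)).trace).re := by
      rw [Matrix.trace_mul_comm, Matrix.trace_mul_comm ρ]
      exact (P_swap h𝒜 P hPmem hPorth m1 ρ).symm
    rw [c1, ← hmod C hC B, ← hinv (C * B)]
  -- Step S1' : normalized form
  have S1' : ∀ C ∈ 𝒜, ∀ B : Mat n,
      ((ρ * ((P ρ)⁻¹ * (C * B))).trace).re = ((C * α B).trace).re := by
    intro C hC B
    have h1 := S1 ((P ρ)⁻¹ * C) (mem_mul h𝒜 hEmem hC) B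
    have e1 : (P ρ) * (((P ρ)⁻¹ * C) * α B) = C * α B := by
      rw [Matrix.mul_assoc ((P ρ)⁻¹) C (α B), hcancel]
    have e2 : ρ * (((P ρ)⁻¹ * C) * B) = ρ * ((P ρ)⁻¹ * (C * B)) := by
      rw [Matrix.mul_assoc ((P ρ)⁻¹) C B]
    rw [e1, e2] at h1
    exact h1.symm
  -- Step S2 : the cone inequality
  have S2 : ∀ G ∈ 𝒜, G.PosSemidef →
      (G * ((P ρ)⁻¹ * ρ) + (ρ * (P ρ)⁻¹) * G).PosSemidef := by
    intro G hG hGpsd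
    have hGherm : Gᴴ = G := hGpsd.1.eq
    refine Matrix.PosSemidef.of_dotProduct_mulVec_nonneg ?_ ?_
    · show (G * ((P ρ)⁻¹ * ρ) + (ρ * (P ρ)⁻¹) * G)ᴴ = _
      rw [Matrix.conjTranspose_add, Matrix.conjTranspose_mul, Matrix.conjTranspose_mul,
        Matrix.conjTranspose_mul, Matrix.conjTranspose_mul, hEherm, hρherm, hGherm,
        add_comm]
    · intro v
      have hBpsd : (Matrix.vecMulVec v (star v)).PosSemidef := vecMulVec_posSemidef v
      have hBherm : (Matrix.vecMulVec v (star v))ᴴ = Matrix.vecMulVec v (star v) :=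
        hBpsd.1.eq
      set B : Mat n := Matrix.vecMulVec v (star v) with hBdef
      have e1 : star v ⬝ᵥ ((G * ((P ρ)⁻¹ * ρ) + (ρ * (P ρ)⁻¹) * G) *ᵥ v)
          = ((G * ((P ρ)⁻¹ * ρ) * B).trace) + (((ρ * (P ρ)⁻¹) * G * B).trace) := by
        rw [Matrix.add_mulVec, dotProduct_add, hBdef,
          trace_mul_vecMulVec, trace_mul_vecMulVec]
      have e2 : (G * ((P ρ)⁻¹ * ρ) * B).trace = star (((ρ * (P ρ)⁻¹) * G * B).trace) := by
        have e3 : ((ρ * (P ρ)⁻¹) * G)ᴴ = G * ((P ρ)⁻¹ * ρ) := by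
          rw [Matrix.conjTranspose_mul, Matrix.conjTranspose_mul, hEherm, hρherm, hGherm]
        have e4 := trace_pair_conj (M := (ρ * (P ρ)⁻¹) * G) (B := B) hBherm
        rw [e3] at e4
        exact e4
      have e5 : 0 ≤ (((ρ * (P ρ)⁻¹) * G * B).trace).re := by
        have e6 : (ρ * (P ρ)⁻¹) * G * B = ρ * ((P ρ)⁻¹ * (G * B)) := by
          simp only [Matrix.mul_assoc]
        rw [e6, S1' G hG B]
        exact psd_mul_trace_re_nonneg hGpsd (hpos B hBpsd)
      rw [e1, e2]
      have e7 : star (((ρ * (P ρ)⁻¹) * G * B).trace) + (((ρ * (P ρ)⁻¹) * G * B).trace)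
          = ((2 * (((ρ * (P ρ)⁻¹) * G * B).trace).re : ℝ) : ℂ) := by
        rw [add_comm, Complex.star_def, Complex.add_conj]
      rw [e7]
      rw [Complex.zero_le_real]
      linarith
  -- Step S3 : skew elements intertwine
  have S3 : ∀ S ∈ 𝒜, Sᴴ = -S → S * ((P ρ)⁻¹ * ρ) = (ρ * (P ρ)⁻¹) * S := by
    intro S hS hSskew
    have claimB : ∀ B : Mat n, B.PosSemidef → (((ρ * (P ρ)⁻¹) * S * B).trace).re = 0 := by
      intro B hB
      have e6 : (ρ * (P ρ)⁻¹) * S * B = ρ * ((P ρ)⁻¹ * (S * B)) := by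
        simp only [Matrix.mul_assoc]
      rw [e6, S1' S hS B]
      exact retr_skew_herm S (α B) hSskew (hpos B hB).1.eq
    have claimH : ∀ B : Mat n, Bᴴ = B → (((ρ * (P ρ)⁻¹) * S * B).trace).re = 0 := by
      intro B hBh
      have hB : B.IsHermitian := hBh
      have hsplit : fc hB (fun x => max x 0) - fc hB (fun x => max (-x) 0) = B := by
        rw [fc_sub, fc_congr hB (g := fun x => x) ?_, fc_id]
        intro i
        rcases le_total 0 (hB.eigenvalues i) with h | h
        · rw [max_eq_left h, max_eq_right (by linarith)]; ring
        · rw [max_eq_right h, max_eq_left (by linarith)]; ring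
      have hp1 := claimB _ (fc_posSemidef hB (fun x => max x 0) (fun i => le_max_right _ _))
      have hp2 := claimB _ (fc_posSemidef hB (fun x => max (-x) 0) (fun i => le_max_right _ _))
      calc (((ρ * (P ρ)⁻¹) * S * B).trace).re
          = (((ρ * (P ρ)⁻¹) * S * (fc hB (fun x => max x 0) - fc hB (fun x => max (-x) 0))).trace).re := by
            rw [hsplit]
        _ = 0 := by
            rw [Matrix.mul_sub, Matrix.trace_sub, Complex.sub_re, hp1, hp2]
            ring
    set W : Mat n := (ρ * (P ρ)⁻¹) * S with hWdef
    have hWW : W + Wᴴ = 0 := by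
      have hsum_herm : (W + Wᴴ)ᴴ = W + Wᴴ := by
        rw [Matrix.conjTranspose_add, Matrix.conjTranspose_conjTranspose, add_comm]
      have h1 : ((W * (W + Wᴴ)).trace).re = 0 := claimH _ hsum_herm
      have h2 : ((Wᴴ * (W + Wᴴ)).trace).re = ((W * (W + Wᴴ)).trace).re := by
        have := trace_pair_conj (M := W) (B := W + Wᴴ) hsum_herm
        rw [this, Complex.star_def, Complex.conj_re]
      have h3 : (((W + Wᴴ)ᴴ * (W + Wᴴ)).trace).re = 0 := by
        rw [hsum_herm, Matrix.add_mul, Matrix.trace_add, Complex.add_re, h1, h2]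
        rw [h1]; ring
      exact eq_zero_of_retr_ctm _ h3
    have hWH : Wᴴ = -(S * ((P ρ)⁻¹ * ρ)) := by
      rw [hWdef, Matrix.conjTranspose_mul, Matrix.conjTranspose_mul, hEherm, hρherm, hSskew,
        Matrix.neg_mul]
    rw [hWH] at hWW
    have h9 : W - S * ((P ρ)⁻¹ * ρ) = 0 := by rw [sub_eq_add_neg]; exact hWW
    exact (sub_eq_zero.mp h9).symm
  -- the square roots of P ρ
  set s' : Mat n := fc hpd0.1 Real.sqrt with hs'def
  set t : Mat n := fc hpd0.1 (fun x => (Real.sqrt x)⁻¹) with htdef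
  have htherm : tᴴ = t := fc_herm _ _
  have hs'herm : s'ᴴ = s' := fc_herm _ _
  have htmem : t ∈ 𝒜 := fc_mem h𝒜 hpd0.1 hmem0 _
  have hs'mem : s' ∈ 𝒜 := fc_mem h𝒜 hpd0.1 hmem0 _
  have hts : t * s' = 1 := fc_isqrt_mul_sqrt hpd0
  have hst : s' * t = 1 := fc_sqrt_mul_isqrt hpd0
  have htunit : IsUnit t := ⟨⟨t, s', hts, hst⟩, rfl⟩
  have htt : t * t = (P ρ)⁻¹ := by
    rw [htdef, fc_isqrt_mul_isqrt hpd0, ← inv_eq_fc hpd0]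
  have hcts : ∀ X : Mat n, t * (s' * X) = X := fun X => by
    rw [← Matrix.mul_assoc, hts, Matrix.one_mul]
  have hcst : ∀ X : Mat n, s' * (t * X) = X := fun X => by
    rw [← Matrix.mul_assoc, hst, Matrix.one_mul]
  have hFpd : (t * ρ * t).PosDef := by
    have h6 := posDef_conj hρ htunit
    rwa [htherm] at h6
  set F : Mat n := t * ρ * t with hFdef
  have hFherm : Fᴴ = F := hFpd.1.eq
  -- transformed inequality
  have Ia' : ∀ G' ∈ 𝒜, G'.PosSemidef → (G' * F + F * G').PosSemidef := by
    intro G' hG' hG'psd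
    have hGmem : s' * G' * s' ∈ 𝒜 := mem_mul h𝒜 (mem_mul h𝒜 hs'mem hG') hs'mem
    have hGpsd : (s' * G' * s').PosSemidef := by
      have := hG'psd.conjTranspose_mul_mul_same s'
      rwa [hs'herm] at this
    have hM := S2 _ hGmem hGpsd
    have hMc := hM.conjTranspose_mul_mul_same t
    rw [htherm] at hMc
    have e : t * ((s' * G' * s') * ((P ρ)⁻¹ * ρ) + (ρ * (P ρ)⁻¹) * (s' * G' * s')) * t
        = G' * F + F * G' := by
      rw [← htt, hFdef]
      simp only [Matrix.mul_add, Matrix.add_mul, Matrix.mul_assoc, hcts, hcst, hts, hst,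
        Matrix.mul_one, Matrix.one_mul]
    rw [← e]
    exact hMc
  -- transformed skew commutation
  have Ib' : ∀ S' ∈ 𝒜, S'ᴴ = -S' → S' * F = F * S' := by
    intro S' hS' hS'skew
    have hSmem : s' * S' * s' ∈ 𝒜 := mem_mul h𝒜 (mem_mul h𝒜 hs'mem hS') hs'mem
    have hSskew : (s' * S' * s')ᴴ = -(s' * S' * s') := by
      rw [Matrix.conjTranspose_mul, Matrix.conjTranspose_mul, hs'herm, hS'skew,
        Matrix.neg_mul, Matrix.mul_neg]
      simp only [Matrix.mul_assoc]
    have h7 := S3 _ hSmem hSskew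
    have h8 := congrArg (fun X => t * X * t) h7
    simp only [Matrix.mul_assoc] at h8
    rw [← htt] at h8
    simp only [Matrix.mul_assoc, hcts, hcst, hts, hst, Matrix.mul_one, Matrix.one_mul] at h8
    rw [hFdef]
    simp only [Matrix.mul_assoc]
    exact h8
  -- Hermitian elements commute with F
  have hcommH : ∀ H ∈ 𝒜, Hᴴ = H → H * F = F * H := by
    intro H hHm hHh
    have hH : H.IsHermitian := hHh
    have hproj : ∀ c : ℝ, (fc hH (fun x => if x = c then 1 else 0)) * F
        = F * (fc hH (fun x => if x = c then 1 else 0)) := by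
      intro c
      have hpmem : fc hH (fun x => if x = c then 1 else 0) ∈ 𝒜 := fc_mem h𝒜 hH hHm _
      have hppsd : (fc hH (fun x => if x = c then 1 else 0)).PosSemidef :=
        fc_posSemidef _ _ (fun i => by by_cases h : hH.eigenvalues i = c <;> simp [h])
      have hp2 : (fc hH (fun x => if x = c then 1 else 0)) * (fc hH (fun x => if x = c then 1 else 0))
          = fc hH (fun x => if x = c then 1 else 0) := by
        rw [fc_mul]
        apply fc_congr
        intro i
        by_cases h : hH.eigenvalues i = c <;> simp [h]
      exact block_comm hp2 (fc_herm _ _) hFherm (Ia' _ hpmem hppsd)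
    have e1 : (∑ c ∈ Finset.image hH.eigenvalues Finset.univ,
        c • fc hH (fun x => if x = c then 1 else 0)) = H := by
      have e2 : ∀ c : ℝ, c • fc hH (fun x => if x = c then 1 else 0)
          = fc hH (fun x => c * (if x = c then 1 else 0)) := fun c => fc_smul hH c _
      rw [Finset.sum_congr rfl (fun c _ => e2 c), fc_sum]
      rw [fc_congr hH (g := fun x => x) ?_, fc_id]
      intro i
      have e3 : ∀ c : ℝ, c * (if hH.eigenvalues i = c then 1 else 0)
          = if hH.eigenvalues i = c then c else 0 := by
        intro c; split <;> simp
      rw [Finset.sum_congr rfl (fun c _ => e3 c), Finset.sum_ite_eq]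
      rw [if_pos (Finset.mem_image_of_mem _ (Finset.mem_univ i))]
    calc H * F = (∑ c ∈ Finset.image hH.eigenvalues Finset.univ,
          c • fc hH (fun x => if x = c then 1 else 0)) * F := by rw [e1]
      _ = ∑ c ∈ Finset.image hH.eigenvalues Finset.univ,
          c • (fc hH (fun x => if x = c then 1 else 0) * F) := by
            rw [Finset.sum_mul]
            exact Finset.sum_congr rfl fun c _ => smul_mul_assoc c _ _
      _ = ∑ c ∈ Finset.image hH.eigenvalues Finset.univ,
          c • (F * fc hH (fun x => if x = c then 1 else 0)) := by
            exact Finset.sum_congr rfl fun c _ => by rw [hproj c]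
      _ = F * (∑ c ∈ Finset.image hH.eigenvalues Finset.univ,
          c • fc hH (fun x => if x = c then 1 else 0)) := by
            rw [Finset.mul_sum]
            exact Finset.sum_congr rfl fun c _ => (mul_smul_comm c _ _).symm
      _ = F * H := by rw [e1]
  -- all of 𝒜 commutes with F
  have hcommAll : ∀ A ∈ 𝒜, A * F = F * A := by
    intro A hA
    have hhm : (2⁻¹ : ℝ) • (A + Aᴴ) ∈ 𝒜 :=
      mem_smul h𝒜 _ (mem_add h𝒜 hA (mem_star h𝒜 hA))
    have hsm : (2⁻¹ : ℝ) • (A - Aᴴ) ∈ 𝒜 :=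
      mem_smul h𝒜 _ (mem_sub h𝒜 hA (mem_star h𝒜 hA))
    have hhh : ((2⁻¹ : ℝ) • (A + Aᴴ))ᴴ = (2⁻¹ : ℝ) • (A + Aᴴ) := by
      simp only [Matrix.conjTranspose_smul, star_trivial, Matrix.conjTranspose_add,
        Matrix.conjTranspose_conjTranspose]
      rw [add_comm]
    have hss : ((2⁻¹ : ℝ) • (A - Aᴴ))ᴴ = -((2⁻¹ : ℝ) • (A - Aᴴ)) := by
      simp only [Matrix.conjTranspose_smul, star_trivial, Matrix.conjTranspose_sub,
        Matrix.conjTranspose_conjTranspose]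
      rw [← smul_neg, neg_sub]
    have hsplit : (2⁻¹ : ℝ) • (A + Aᴴ) + (2⁻¹ : ℝ) • (A - Aᴴ) = A := by
      rw [← smul_add]
      have : (A + Aᴴ) + (A - Aᴴ) = (2 : ℝ) • A := by
        rw [two_smul]; abel
      rw [this, smul_smul]
      norm_num
    have hc1 : ((2⁻¹ : ℝ) • (A + Aᴴ)) * F = F * ((2⁻¹ : ℝ) • (A + Aᴴ)) :=
      hcommH _ hhm hhh
    have hc2 : ((2⁻¹ : ℝ) • (A - Aᴴ)) * F = F * ((2⁻¹ : ℝ) • (A - Aᴴ)) :=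
      Ib' _ hsm hss
    calc A * F = ((2⁻¹ : ℝ) • (A + Aᴴ) + (2⁻¹ : ℝ) • (A - Aᴴ)) * F := by rw [hsplit]
      _ = F * ((2⁻¹ : ℝ) • (A + Aᴴ) + (2⁻¹ : ℝ) • (A - Aᴴ)) := by
          rw [Matrix.add_mul, Matrix.mul_add, hc1, hc2]
      _ = F * A := by rw [hsplit]
  -- ρ commutes with P ρ
  have hρ0t : (P ρ) * t = t * (P ρ) := fc_commute hpd0.1 rfl _
  have h4 : (P ρ) * ρ = ρ * (P ρ) := by
    have h1 := hcommAll _ hmem0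
    have lhs : (P ρ) * F = t * ((P ρ) * ρ * t) := by
      rw [hFdef]
      calc (P ρ) * (t * ρ * t) = ((P ρ) * t) * (ρ * t) := by simp only [Matrix.mul_assoc]
        _ = (t * (P ρ)) * (ρ * t) := by rw [hρ0t]
        _ = t * ((P ρ) * ρ * t) := by simp only [Matrix.mul_assoc]
    have rhs : F * (P ρ) = t * (ρ * ((P ρ) * t)) := by
      rw [hFdef]
      calc (t * ρ * t) * (P ρ) = t * (ρ * (t * (P ρ))) := by simp only [Matrix.mul_assoc]
        _ = t * (ρ * ((P ρ) * t)) := by rw [← hρ0t]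
    have h2 : t * ((P ρ) * ρ * t) = t * (ρ * ((P ρ) * t)) := by rw [← lhs, ← rhs, h1]
    have h3 := congrArg (fun Z => s' * Z) h2
    simp only [hcst] at h3
    have h4' := congrArg (fun Z => Z * s') h3
    simp only [Matrix.mul_assoc, hts, Matrix.mul_one] at h4'
    exact h4'
  have hρρ0 : ρ * (P ρ) = (P ρ) * ρ := h4.symm
  have hρt : ρ * t = t * ρ := fc_commute hpd0.1 hρρ0 _
  have hFE : F = (P ρ)⁻¹ * ρ := by
    rw [hFdef, Matrix.mul_assoc, hρt, ← Matrix.mul_assoc, htt]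
  intro A hA
  have h1 := hcommAll A hA
  rw [hFE] at h1
  calc ρ * A * ρ⁻¹ = (P ρ) * ((P ρ)⁻¹ * (ρ * A)) * ρ⁻¹ := by rw [hcancel]
    _ = (P ρ) * (((P ρ)⁻¹ * ρ) * A) * ρ⁻¹ := by rw [← Matrix.mul_assoc ((P ρ)⁻¹) ρ A]
    _ = (P ρ) * (A * ((P ρ)⁻¹ * ρ)) * ρ⁻¹ := by rw [← h1]
    _ = (P ρ) * A * (P ρ)⁻¹ * (ρ * ρ⁻¹) := by simp only [Matrix.mul_assoc]
    _ = (P ρ) * A * (P ρ)⁻¹ := by rw [Matrix.mul_nonsing_inv _ hdρ, Matrix.mul_one]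

end main3

end Stmt5Aux


/-- For a positive definite `ρ` and a real `*`-subalgebra `𝒜` with
orthogonal projection `P` (w.r.t. the real Hilbert–Schmidt inner product) and `ρ₀ = P ρ`,
the following are equivalent:
(i) there is a real conditional expectation `α` onto `𝒜` with
    `Re Tr(ρ B) = Re Tr(ρ α(B))` for all `B`;
(ii) `ρ₀` is positive definite and `ρ A ρ⁻¹ = ρ₀ A ρ₀⁻¹` for every `A ∈ 𝒜`;
(iii) `ρ A ρ⁻¹ ∈ 𝒜` for every `A ∈ 𝒜`. -/
theorem stmt5 {n : ℕ} (ρ : Mat n) (hρ : ρ.PosDef)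
    (𝒜 : Set (Mat n)) (h𝒜 : IsRealStarSubalgebra 𝒜)
    (P : Mat n →ₗ[ℝ] Mat n)
    (hPmem : ∀ B : Mat n, P B ∈ 𝒜)
    (hPorth : ∀ A ∈ 𝒜, ∀ B : Mat n, ((Aᴴ * (B - P B)).trace).re = 0) :
    ((∃ α : Mat n →ₗ[ℝ] Mat n, IsRealCondExp 𝒜 α ∧
        ∀ B : Mat n, ((ρ * B).trace).re = ((ρ * α B).trace).re) ↔
      ((P ρ).PosDef ∧ ∀ A ∈ 𝒜, ρ * A * ρ⁻¹ = (P ρ) * A * (P ρ)⁻¹)) ∧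
    (((P ρ).PosDef ∧ ∀ A ∈ 𝒜, ρ * A * ρ⁻¹ = (P ρ) * A * (P ρ)⁻¹) ↔
      (∀ A ∈ 𝒜, ρ * A * ρ⁻¹ ∈ 𝒜)) := by
  constructor
  · constructor
    · rintro ⟨α, ⟨hpos, hmem, hmod⟩, hinv⟩
      exact ⟨Stmt5Aux.P_rho_posDef h𝒜 P hPmem hPorth hρ,
        Stmt5Aux.impl_i_to_ii hρ h𝒜 P hPmem hPorth α hpos hmem hmod hinv⟩
    · rintro ⟨hpd, hcomm⟩
      exact Stmt5Aux.impl_ii_to_i hρ h𝒜 P hPmem hPorth hcomm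
  · constructor
    · rintro ⟨hpd, hcomm⟩
      exact Stmt5Aux.impl_ii_to_iii hρ h𝒜 P hPmem hPorth hcomm
    · intro h3
      exact ⟨Stmt5Aux.P_rho_posDef h𝒜 P hPmem hPorth hρ,
        Stmt5Aux.impl_iii_to_ii hρ h𝒜 P hPmem hPorth h3⟩
end

section
/- Let α : M_n(ℂ) → M_n(ℂ) be a real positive map with α(I) = I that is faithful (if B is positive semidefinite and α(B) = 0 then B = 0) and idempotent (α ∘ α = α). Let 𝒜_J := { A ∈ M_n(ℂ) : A Hermitian and α(A) = A } be the set of Hermitian fixed points of α. Then: (i) 𝒜_J is closed under the Jordan product, i.e. if A, B ∈ 𝒜_J then A∘B := (AB + BA)/2 ∈ 𝒜_J; (ii) for every A ∈ 𝒜_J and every Hermitian B ∈ M_n(ℂ), α(A∘B) = A∘α(B); and (iii) for every A ∈ 𝒜_J and every Hermitian B ∈ M_n(ℂ), α(ABA) = A·α(B)·A. -/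
open Matrix Complex Filter
open scoped ComplexOrder

open scoped InnerProductSpace

lemma herm_dot {n : ℕ} {M : Mat n} (hM : M.IsHermitian) (w z : Fin n → ℂ) :
    star w ⬝ᵥ (M *ᵥ z) = star (M *ᵥ w) ⬝ᵥ z := by
  rw [star_mulVec, hM, ← dotProduct_mulVec]

lemma nsq_eq {n : ℕ} (w : Fin n → ℂ) :
    star w ⬝ᵥ w = ((‖(WithLp.equiv 2 (Fin n → ℂ)).symm w‖^2 : ℝ) : ℂ) := by
  rw [show star w ⬝ᵥ w = ⟪(WithLp.equiv 2 (Fin n → ℂ)).symm w, (WithLp.equiv 2 (Fin n → ℂ)).symm w⟫_ℂ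
    from dotProduct_comm _ _, inner_self_eq_norm_sq_to_K]
  push_cast
  rfl

lemma my_sum_mulVec {n : ℕ} {ι : Type*} (s : Finset ι) (M : ι → Mat n) (v : Fin n → ℂ) :
    (∑ i ∈ s, M i) *ᵥ v = ∑ i ∈ s, M i *ᵥ v := by
  ext j
  simp [Matrix.mulVec, dotProduct, Matrix.sum_apply, Finset.sum_apply, Finset.sum_mul]
  rw [Finset.sum_comm]

lemma my_dot_sum {n : ℕ} {ι : Type*} (s : Finset ι) (w : Fin n → ℂ) (f : ι → Fin n → ℂ) :
    w ⬝ᵥ (∑ i ∈ s, f i) = ∑ i ∈ s, w ⬝ᵥ f i := by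
  simp [dotProduct, Finset.sum_apply, Finset.mul_sum]
  rw [Finset.sum_comm]

lemma spectral_pieces {n : ℕ} (C : Mat n) (hC : C.IsHermitian) :
    ∃ (P : Fin n → Mat n) (lam : Fin n → ℝ),
      (∀ i, (P i).PosSemidef) ∧ (∑ i, P i = 1) ∧
      (∑ i, lam i • P i = C) ∧ (∑ i, (lam i * lam i) • P i = C * C) := by
  classical
  set U : Mat n := (hC.eigenvectorUnitary : Mat n) with hU
  set lam := hC.eigenvalues with hlam
  have hUU : U * star U = 1 := by simp [hU]
  have hUU' : star U * U = 1 := by simp [hU]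
  have hdiag : ∀ g : Fin n → ℝ, (∑ i, g i • diagonal (Pi.single i (1:ℂ)))
      = diagonal (fun j => (g j : ℂ)) := by
    intro g; ext j k
    by_cases h : j = k
    · subst h
      simp [Matrix.sum_apply, Matrix.diagonal_apply, Pi.single_apply]
    · simp [Matrix.sum_apply, Matrix.diagonal_apply, h]
  have key : ∀ g : Fin n → ℝ, ∑ i, g i • (U * diagonal (Pi.single i 1) * star U)
      = U * diagonal (fun j => (g j : ℂ)) * star U := by
    intro g
    rw [← hdiag g]
    simp [Matrix.mul_sum, Finset.sum_mul, smul_mul_assoc, mul_smul_comm]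
  have hspec : C = U * diagonal (fun j => (lam j : ℂ)) * star U := hC.spectral_theorem
  refine ⟨fun i => U * diagonal (Pi.single i 1) * star U, lam, ?_, ?_, ?_, ?_⟩
  · intro i
    refine Matrix.PosSemidef.mul_mul_conjTranspose_same ?_ U
    exact Matrix.PosSemidef.diagonal (by
      intro j
      by_cases h : j = i <;> simp [Pi.single_apply, h])
  · have := key (fun _ => 1)
    simp only [one_smul] at this
    rw [this]
    simp [Matrix.diagonal_one, hUU]
  · rw [key lam, ← hspec]
  · rw [key (fun i => lam i * lam i)]
    have : C * C = U * (diagonal (fun j => (lam j : ℂ)) * (star U * U) *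
        diagonal (fun j => (lam j : ℂ))) * star U := by
      rw [hspec]; noncomm_ring
    rw [this, hUU', mul_one, Matrix.diagonal_mul_diagonal]
    push_cast
    rfl

lemma core_ineq {n : ℕ} (Q : Fin n → Mat n) (hQ : ∀ i, (Q i).PosSemidef)
    (hsum : ∑ i, Q i = 1) (lam : Fin n → ℝ) :
    ((∑ i, (lam i * lam i) • Q i) - (∑ i, lam i • Q i) * (∑ i, lam i • Q i)).PosSemidef := by
  classical
  set X : Mat n := ∑ i, lam i • Q i with hX
  set Y : Mat n := ∑ i, (lam i * lam i) • Q i with hY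
  have hXh : X.IsHermitian := by
    show _ = _
    rw [hX, conjTranspose_sum]
    exact Finset.sum_congr rfl fun i _ => by
      rw [conjTranspose_smul, star_trivial, (hQ i).1]
  have hYh : Y.IsHermitian := by
    show _ = _
    rw [hY, conjTranspose_sum]
    exact Finset.sum_congr rfl fun i _ => by
      rw [conjTranspose_smul, star_trivial, (hQ i).1]
  refine PosSemidef.of_dotProduct_mulVec_nonneg (hYh.sub ((conjTranspose_mul X X).trans (by rw [hXh]))) fun v => ?_
  set S : Fin n → Mat n := fun i => open scoped MatrixOrder Matrix.Norms.L2Operator in CFC.sqrt (Q i) with hSdef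
  have hSS : ∀ i, S i * S i = Q i := fun i => open scoped MatrixOrder Matrix.Norms.L2Operator in
    CFC.sqrt_mul_sqrt_self _ (hQ i).nonneg
  have hSh : ∀ i, (S i).IsHermitian := fun i => by
    open scoped MatrixOrder Matrix.Norms.L2Operator in
    exact (Matrix.nonneg_iff_posSemidef.mp (CFC.sqrt_nonneg (Q i))).1
  set u : Fin n → ℂ := X *ᵥ v with hu
  set a : Fin n → Fin n → ℂ := fun i => S i *ᵥ u with ha
  set b : Fin n → Fin n → ℂ := fun i => S i *ᵥ v with hb
  set e : (Fin n → ℂ) → EuclideanSpace ℂ (Fin n) :=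
    fun w => (WithLp.equiv 2 (Fin n → ℂ)).symm w with he
  set T : ℝ := ‖e u‖^2 with hT
  set R : ℝ := ∑ i, (lam i)^2 * ‖e (b i)‖^2 with hR
  have hB : star v ⬝ᵥ ((X * X) *ᵥ v) = (T : ℂ) := by
    rw [← mulVec_mulVec, herm_dot hXh, ← hu, nsq_eq]
  have hQdot : ∀ (i : Fin n) (w z : Fin n → ℂ),
      star w ⬝ᵥ (Q i *ᵥ z) = star (S i *ᵥ w) ⬝ᵥ (S i *ᵥ z) := by
    intro i w z
    rw [← hSS i, ← mulVec_mulVec, herm_dot (hSh i)]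
  have hC : (T : ℂ) = ∑ i, (lam i : ℂ) * ⟪e (a i), e (b i)⟫_ℂ := by
    have h0 : (T : ℂ) = star u ⬝ᵥ (X *ᵥ v) := by rw [← nsq_eq]
    rw [h0, hX, my_sum_mulVec, my_dot_sum]
    refine Finset.sum_congr rfl fun i _ => ?_
    rw [smul_mulVec, dotProduct_smul, hQdot i u v,
      Complex.real_smul]
    exact congrArg _ (dotProduct_comm _ _)
  have hD : ∑ i, ‖e (a i)‖^2 = T := by
    have h1 : ∑ i, ((‖e (a i)‖^2 : ℝ) : ℂ) = (T : ℂ) := by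
      have h2 : ∀ i : Fin n, ((‖e (a i)‖^2 : ℝ) : ℂ) = star u ⬝ᵥ (Q i *ᵥ u) := by
        intro i; rw [hQdot i u u, nsq_eq]
      simp_rw [h2]
      rw [← my_dot_sum, ← my_sum_mulVec, hsum, one_mulVec, nsq_eq]
    exact_mod_cast h1
  have hE : star v ⬝ᵥ (Y *ᵥ v) = (R : ℂ) := by
    rw [hY, my_sum_mulVec, my_dot_sum, hR]
    push_cast
    refine Finset.sum_congr rfl fun i _ => ?_
    rw [smul_mulVec, dotProduct_smul, hQdot i v v, nsq_eq, Complex.real_smul]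
    push_cast
    ring
  have hT0 : 0 ≤ T := by positivity
  have hR0 : 0 ≤ R := Finset.sum_nonneg fun i _ => by positivity
  have hTZ : T ≤ ∑ i, ‖e (a i)‖ * (|lam i| * ‖e (b i)‖) := by
    calc T = ‖(T : ℂ)‖ := by rw [Complex.norm_real, Real.norm_eq_abs, _root_.abs_of_nonneg hT0]
    _ = ‖∑ i, (lam i : ℂ) * ⟪e (a i), e (b i)⟫_ℂ‖ := by rw [hC]
    _ ≤ ∑ i, ‖(lam i : ℂ) * ⟪e (a i), e (b i)⟫_ℂ‖ := norm_sum_le _ _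
    _ ≤ ∑ i, ‖e (a i)‖ * (|lam i| * ‖e (b i)‖) := by
        refine Finset.sum_le_sum fun i _ => ?_
        rw [norm_mul, Complex.norm_real]
        calc ‖lam i‖ * ‖⟪e (a i), e (b i)⟫_ℂ‖
            ≤ |lam i| * (‖e (a i)‖ * ‖e (b i)‖) :=
              mul_le_mul_of_nonneg_left (norm_inner_le_norm _ _) (abs_nonneg _)
        _ = ‖e (a i)‖ * (|lam i| * ‖e (b i)‖) := by ring
  have hCS : (∑ i, ‖e (a i)‖ * (|lam i| * ‖e (b i)‖))^2 ≤ T * R := by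
    calc (∑ i, ‖e (a i)‖ * (|lam i| * ‖e (b i)‖))^2
        ≤ (∑ i, ‖e (a i)‖^2) * (∑ i, (|lam i| * ‖e (b i)‖)^2) :=
          Finset.sum_mul_sq_le_sq_mul_sq _ _ _
    _ = T * R := by
        rw [hD, hR]
        congr 1
        refine Finset.sum_congr rfl fun i _ => ?_
        rw [mul_pow, _root_.sq_abs]
  have hTR : T ≤ R := by
    rcases eq_or_lt_of_le hT0 with h | h
    · linarith
    · have h2 : T * T ≤ T * R := by nlinarith
      exact le_of_mul_le_mul_left h2 h
  rw [sub_mulVec, dotProduct_sub, hE, hB, ← Complex.ofReal_sub, Complex.zero_le_real]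
  linarith

lemma kadison {n : ℕ} (α : Mat n →ₗ[ℝ] Mat n)
    (hpos : ∀ B : Mat n, B.PosSemidef → (α B).PosSemidef) (hunital : α 1 = 1)
    {C : Mat n} (hC : C.IsHermitian) :
    (α (C * C) - α C * α C).PosSemidef := by
  obtain ⟨P, lam, hP, hPsum, hPC, hPC2⟩ := spectral_pieces C hC
  have hαC : α C = ∑ i, lam i • α (P i) := by
    rw [← hPC, map_sum]; simp only [_root_.map_smul]
  have hαC2 : α (C * C) = ∑ i, (lam i * lam i) • α (P i) := by
    rw [← hPC2, map_sum]; simp only [_root_.map_smul]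
  rw [hαC, hαC2]
  exact core_ineq _ (fun i => hpos _ (hP i))
    (by rw [← map_sum, hPsum, hunital]) lam

lemma quad_vanish {n : ℕ} (D E : Mat n) (hE : E.PosSemidef)
    (h : ∀ t : ℝ, (t • D + (t * t) • E).PosSemidef) : D = 0 := by
  have hDh : D.IsHermitian := by
    have h1 : (D + E).IsHermitian := by
      have := (h 1).1; simpa using this
    simpa using h1.sub hE.1
  have hzero : ∀ v : Fin n → ℂ, star v ⬝ᵥ (D *ᵥ v) = 0 := by
    intro v
    set d : ℂ := star v ⬝ᵥ (D *ᵥ v) with hd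
    set ec : ℂ := star v ⬝ᵥ (E *ᵥ v) with hec
    have hdreal : d.im = 0 := by
      have hsd : (starRingEnd ℂ) d = d := by
        rw [← star_def]
        conv_lhs => rw [hd, star_dotProduct]
        rw [star_star, ← herm_dot hDh, ← hd]
      have h2 := Complex.conj_eq_iff_re.mp hsd
      rw [← h2]; simp
    have hecr : 0 ≤ ec.re ∧ 0 = ec.im := Complex.nonneg_iff.mp (hE.dotProduct_mulVec_nonneg v)
    set dr := d.re with hdr
    set er := ec.re with her
    have ht : ∀ t : ℝ, 0 ≤ t * dr + t * t * er := by
      intro t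
      have hp := (h t).dotProduct_mulVec_nonneg v
      rw [add_mulVec, smul_mulVec, smul_mulVec, dotProduct_add,
        dotProduct_smul, dotProduct_smul] at hp
      have := (Complex.nonneg_iff.mp hp).1
      simpa [Complex.real_smul, hdreal, ← hecr.2] using this
    have her1 : (0:ℝ) < er + 1 := by
      have := hecr.1; linarith
    have key : (0:ℝ) ≤ -(dr^2) / ((er+1)^2) := by
      have h1 := ht (-dr / (er + 1))
      have heq : (-dr / (er + 1)) * dr + (-dr / (er + 1)) * (-dr / (er + 1)) * er
          = -(dr^2) / ((er+1)^2) := by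
        field_simp
        ring
      rw [heq] at h1; exact h1
    have hdr0 : dr = 0 := by
      rw [le_div_iff₀ (by positivity)] at key
      nlinarith
    show d = 0
    apply Complex.ext
    · rw [← hdr, hdr0]; simp
    · rw [hdreal]; simp
  have hDpsd : D.PosSemidef := PosSemidef.of_dotProduct_mulVec_nonneg hDh fun v => by rw [hzero v]
  have hDv : ∀ v, D *ᵥ v = 0 := fun v => (hDpsd.dotProduct_mulVec_zero_iff v).mp (hzero v)
  ext i j
  have := congrFun (hDv (Pi.single j 1)) i
  simpa [Matrix.mulVec_single] using this

lemma sq_expand {n : ℕ} (X Y : Mat n) (t : ℝ) :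
    (X + t • Y) * (X + t • Y) = X * X + t • (X * Y + Y * X) + (t * t) • (Y * Y) := by
  simp only [mul_add, add_mul, smul_mul_assoc, mul_smul_comm, smul_smul, smul_add]
  abel

lemma choi {n : ℕ} (α : Mat n →ₗ[ℝ] Mat n)
    (hpos : ∀ B : Mat n, B.PosSemidef → (α B).PosSemidef) (hunital : α 1 = 1)
    {A B : Mat n} (hA : A.IsHermitian) (hB : B.IsHermitian)
    (hA2 : α (A * A) = α A * α A) :
    α (A * B + B * A) = α A * α B + α B * α A := by
  have hEpsd := kadison α hpos hunital hB
  have hq : ∀ t : ℝ, (t • (α (A * B + B * A) - (α A * α B + α B * α A))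
      + (t * t) • (α (B * B) - α B * α B)).PosSemidef := by
    intro t
    have hCt : (A + t • B).IsHermitian := by
      show _ = _
      rw [conjTranspose_add, conjTranspose_smul, star_trivial, hA, hB]
    have hk := kadison α hpos hunital hCt
    have hexp : α ((A + t • B) * (A + t • B)) - α (A + t • B) * α (A + t • B)
        = t • (α (A * B + B * A) - (α A * α B + α B * α A))
          + (t * t) • (α (B * B) - α B * α B) := by
      rw [sq_expand A B t, map_add, map_add, _root_.map_smul, _root_.map_smul,
        show α (A + t • B) = α A + t • α B from by rw [map_add, _root_.map_smul],
        sq_expand (α A) (α B) t, hA2]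
      module
    rw [← hexp]
    exact hk
  have h0 := quad_vanish _ _ hEpsd hq
  exact sub_eq_zero.mp h0

/-- Let `α` be a unital real positive map that is faithful and idempotent,
and let `𝒜_J` be its set of Hermitian fixed points. Then `𝒜_J` is closed under the Jordan
product, `α` is a Jordan conditional expectation onto `𝒜_J`
(`α(A∘B) = A∘α(B)`), and `α(ABA) = A·α(B)·A` for `A ∈ 𝒜_J` and Hermitian `B`. -/
theorem stmt7 {n : ℕ} (α : Mat n →ₗ[ℝ] Mat n)
    (hpos : IsRealPositiveMap α) (hunital : α 1 = 1)
    (hfaithful : ∀ B : Mat n, B.PosSemidef → α B = 0 → B = 0)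
    (hidem : ∀ B : Mat n, α (α B) = α B) :
    (∀ A : Mat n, A.IsHermitian → α A = A → ∀ B : Mat n, B.IsHermitian → α B = B →
      α ((2⁻¹ : ℂ) • (A * B + B * A)) = (2⁻¹ : ℂ) • (A * B + B * A)) ∧
    (∀ A : Mat n, A.IsHermitian → α A = A → ∀ B : Mat n, B.IsHermitian →
      α ((2⁻¹ : ℂ) • (A * B + B * A)) = (2⁻¹ : ℂ) • (A * α B + α B * A)) ∧
    (∀ A : Mat n, A.IsHermitian → α A = A → ∀ B : Mat n, B.IsHermitian →
      α (A * B * A) = A * α B * A) := by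
  have hpos' : ∀ B : Mat n, B.PosSemidef → (α B).PosSemidef := hpos
  -- fixed Hermitian points have fixed squares
  have fixsq : ∀ A : Mat n, A.IsHermitian → α A = A → α (A * A) = A * A := by
    intro A hA hfix
    have hk := kadison α hpos' hunital hA
    rw [hfix] at hk
    have h0 : α (α (A * A) - A * A) = 0 := by
      rw [map_sub, hidem]
      exact sub_self _
    exact sub_eq_zero.mp (hfaithful _ hk h0)
  have jordan : ∀ A : Mat n, A.IsHermitian → α A = A → ∀ B : Mat n, B.IsHermitian →
      α (A * B + B * A) = A * α B + α B * A := by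
    intro A hA hfix B hB
    have hA2 : α (A * A) = α A * α A := by rw [fixsq A hA hfix, hfix]
    rw [choi α hpos' hunital hA hB hA2, hfix]
  have cast2 : ∀ N : Mat n, (2⁻¹ : ℂ) • N = (2⁻¹ : ℝ) • N := by
    intro N; ext i j
    simp [Matrix.smul_apply, Complex.real_smul]
  have halfsmul : ∀ M : Mat n, α ((2⁻¹ : ℂ) • M) = (2⁻¹ : ℂ) • α M := by
    intro M
    rw [cast2, _root_.map_smul, ← cast2]
  refine ⟨?_, ?_, ?_⟩
  · intro A hA hfixA B hB hfixB
    rw [halfsmul, jordan A hA hfixA B hB, hfixB]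
  · intro A hA hfixA B hB
    rw [halfsmul, jordan A hA hfixA B hB]
  · intro A hA hfixA B hB
    have hJ : (A * B + B * A).IsHermitian := by
      show _ = _
      rw [conjTranspose_add, conjTranspose_mul, conjTranspose_mul, hA, hB, add_comm]
    have hA2fix : α (A * A) = A * A := fixsq A hA hfixA
    have hA2herm : (A * A).IsHermitian := by
      show _ = _
      rw [conjTranspose_mul, hA]
    have h1 := jordan A hA hfixA _ hJ
    have h2 := jordan (A * A) hA2herm hA2fix B hB
    have h3 := jordan A hA hfixA B hB
    have hiden : A * (A * B + B * A) + (A * B + B * A) * A - ((A * A) * B + B * (A * A))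
        = A * B * A + A * B * A := by noncomm_ring
    have hiden2 : A * (A * α B + α B * A) + (A * α B + α B * A) * A
        - ((A * A) * α B + α B * (A * A)) = A * α B * A + A * α B * A := by noncomm_ring
    have h4 : α (A * B * A) + α (A * B * A) = A * α B * A + A * α B * A := by
      have hc : A * α (A * B + B * A) + α (A * B + B * A) * A
          - ((A * A) * α B + α B * (A * A)) = α (A * B * A) + α (A * B * A) := by
        rw [← h1, ← h2, ← map_sub, hiden, map_add]
      rw [h3, hiden2] at hc
      exact hc.symm
    have half : ∀ X : Mat n, (2⁻¹ : ℝ) • (X + X) = X := by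
      intro X
      rw [← two_smul ℝ, smul_smul]
      norm_num
    calc α (A * B * A) = (2⁻¹ : ℝ) • (α (A * B * A) + α (A * B * A)) := (half _).symm
    _ = (2⁻¹ : ℝ) • (A * α B * A + A * α B * A) := by rw [h4]
    _ = A * α B * A := half _
end

section
/- Let A be a real m×m matrix such that: (a) there is a constant C with ‖Aⁿ‖ ≤ C for all natural numbers n, and (b) every complex eigenvalue λ of A (i.e. every λ in the spectrum of A viewed as a complex matrix via the coercion ℝ → ℂ) satisfies |λ| ≤ 1, with λ = 1 being the only eigenvalue of modulus one. Then the limit P = lim_{n→∞} Aⁿ exists, and P is the projection onto the fixed-point subspace of A: P·P = P, A·P = P = P·A, and for every vector v one has P v = v if and only if A v = v. -/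
open Matrix Complex Filter

lemma pow_tendsto_zero_of_spectralRadius_lt_one {A : Type*} [NormedRing A] [NormedAlgebra ℂ A]
    [CompleteSpace A] (a : A) (h : spectralRadius ℂ a < 1) :
    Tendsto (fun n : ℕ => a ^ n) atTop (nhds 0) := by
  obtain ⟨r, hr1, hr2⟩ := exists_between h
  have hrtop : r ≠ ⊤ := (hr2.trans_le le_top).ne
  have hgel := spectrum.pow_nnnorm_pow_one_div_tendsto_nhds_spectralRadius a
  have hev : ∀ᶠ n : ℕ in atTop, (‖a ^ n‖₊ : ENNReal) ^ (1 / n : ℝ) < r :=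
    hgel.eventually_lt_const hr1
  rw [tendsto_zero_iff_norm_tendsto_zero]
  have hr1' : r.toNNReal < 1 := by
    rw [← ENNReal.coe_lt_one_iff, ENNReal.coe_toNNReal hrtop]; exact hr2
  have key : ∀ᶠ n : ℕ in atTop, ‖a ^ n‖ ≤ (r.toNNReal : ℝ) ^ n := by
    filter_upwards [hev, eventually_ge_atTop 1] with n hn hn1
    have hne : (n : ℝ) ≠ 0 := by positivity
    have h2 : ((‖a ^ n‖₊ : ENNReal) ^ (1 / n : ℝ)) ^ (n : ℝ) ≤ r ^ (n : ℝ) :=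
      ENNReal.rpow_le_rpow hn.le (by positivity)
    rw [← ENNReal.rpow_mul, one_div, inv_mul_cancel₀ hne, ENNReal.rpow_one,
      ENNReal.rpow_natCast, ← ENNReal.coe_toNNReal hrtop, ← ENNReal.coe_pow,
      ENNReal.coe_le_coe] at h2
    calc ‖a ^ n‖ = ((‖a ^ n‖₊ : ℝ)) := rfl
    _ ≤ (r.toNNReal : ℝ) ^ n := by exact_mod_cast h2
  have hlim : Tendsto (fun n : ℕ => (r.toNNReal : ℝ) ^ n) atTop (nhds 0) :=
    tendsto_pow_atTop_nhds_zero_of_lt_one (by positivity) (by exact_mod_cast hr1')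
  exact squeeze_zero' (.of_forall fun n => norm_nonneg _) key hlim

lemma clm_pow_tendsto_zero {E : Type*} [NormedAddCommGroup E] [NormedSpace ℂ E]
    [FiniteDimensional ℂ E] (f : E →L[ℂ] E)
    (h : ∀ μ : ℂ, (∃ v : E, v ≠ 0 ∧ f v = μ • v) → ‖μ‖ < 1) :
    ∀ v : E, Tendsto (fun n : ℕ => (f ^ n) v) atTop (nhds 0) := by
  have hS : ∀ μ ∈ spectrum ℂ f, ‖μ‖ < 1 := by
    intro μ hμ
    rw [spectrum.mem_iff] at hμ
    set g := algebraMap ℂ (E →L[ℂ] E) μ - f with hg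
    have hbij : ¬ Function.Bijective g := fun hb =>
      hμ (ContinuousLinearMap.isUnit_iff_bijective.2 hb)
    have hinj : ¬ Function.Injective g := by
      intro hi
      have hi' : Function.Injective g.toLinearMap := hi
      exact hbij ⟨hi, (LinearMap.injective_iff_surjective
        (f := g.toLinearMap)).1 hi'⟩
    rw [Function.not_injective_iff] at hinj
    obtain ⟨x, y, hxy, hne⟩ := hinj
    refine h μ ⟨x - y, sub_ne_zero.2 hne, ?_⟩
    have h0 : g (x - y) = 0 := by rw [map_sub, hxy, sub_self]
    have h1 : μ • (x - y) - f (x - y) = 0 := by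
      simpa [hg, ContinuousLinearMap.sub_apply, Algebra.algebraMap_eq_smul_one] using h0
    exact (sub_eq_zero.mp h1).symm
  have hrad : spectralRadius ℂ f < 1 := by
    rcases (spectrum ℂ f).eq_empty_or_nonempty with he | hne
    · simp [spectralRadius, he]
    · obtain ⟨μ₀, hμ₀, hmax⟩ := (spectrum.isCompact f).exists_isMaxOn hne
        (continuous_norm.continuousOn)
      have : spectralRadius ℂ f ≤ (‖μ₀‖₊ : ENNReal) := by
        refine iSup₂_le fun μ hμ => ?_
        exact_mod_cast (by exact_mod_cast hmax hμ : ‖μ‖₊ ≤ ‖μ₀‖₊)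
      refine this.trans_lt ?_
      exact_mod_cast (by exact_mod_cast hS μ₀ hμ₀ : ‖μ₀‖₊ < 1)
  intro v
  have hpow := pow_tendsto_zero_of_spectralRadius_lt_one f hrad
  rw [tendsto_zero_iff_norm_tendsto_zero] at hpow ⊢
  refine squeeze_zero' (.of_forall fun n => norm_nonneg _)
    (.of_forall fun n => (f ^ n).le_opNorm v) ?_
  simpa using hpow.mul_const ‖v‖

/-- Let `A` be a real `m × m` matrix with uniformly bounded powers
(entrywise) whose complex eigenvalues all satisfy `|λ| ≤ 1`, with `λ = 1` the only
eigenvalue of modulus one. Then the powers `Aⁿ` converge (entrywise) to a matrix `P`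
which is the projection onto the fixed-point subspace of `A`:
`P² = P`, `AP = P = PA`, and `P v = v ↔ A v = v` for every vector `v`. -/
theorem stmt10 {m : ℕ} (A : Matrix (Fin m) (Fin m) ℝ)
    (hbound : ∃ C : ℝ, ∀ (k : ℕ) (i j : Fin m), |(A ^ k) i j| ≤ C)
    (hspec : ∀ μ ∈ spectrum ℂ (A.map (Complex.ofReal)),
      ‖μ‖ ≤ 1 ∧ (‖μ‖ = 1 → μ = 1)) :
    ∃ P : Matrix (Fin m) (Fin m) ℝ,
      (∀ i j : Fin m, Tendsto (fun k : ℕ => (A ^ k) i j) atTop (nhds (P i j))) ∧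
      P * P = P ∧ A * P = P ∧ P * A = P ∧
      (∀ v : Fin m → ℝ, P.mulVec v = v ↔ A.mulVec v = v) := by
  classical
  obtain ⟨C, hC⟩ := hbound
  set B : Matrix (Fin m) (Fin m) ℂ := A.map (Complex.ofReal) with hB
  have hBpow : ∀ k : ℕ, B ^ k = (A ^ k).map (Complex.ofReal) := by
    intro k
    have h1 : B = Complex.ofRealHom.mapMatrix A := rfl
    rw [h1, ← map_pow, RingHom.mapMatrix_apply]
    rfl
  have hCB : ∀ (k : ℕ) (i j : Fin m), ‖(B ^ k) i j‖ ≤ C := by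
    intro k i j
    rw [hBpow k, Matrix.map_apply]
    simpa using hC k i j
  set f : ((Fin m → ℂ) →ₗ[ℂ] (Fin m → ℂ)) := Matrix.toLinAlgEquiv' B with hf
  have hfpow : ∀ (k : ℕ) (v : Fin m → ℂ), (f ^ k) v = (B ^ k) *ᵥ v := by
    intro k v
    rw [hf, ← map_pow, Matrix.toLinAlgEquiv'_apply]
  set ker₁ : Submodule ℂ (Fin m → ℂ) := LinearMap.ker (f - 1) with hker
  set rng : Submodule ℂ (Fin m → ℂ) := LinearMap.range (f - 1) with hrng
  -- disjointness via boundedness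
  have hdisj : Disjoint ker₁ rng := by
    rw [Submodule.disjoint_def]
    intro w hw1 hw2
    by_contra hw0
    obtain ⟨j, hj⟩ : ∃ j, w j ≠ 0 := by
      by_contra h'; push_neg at h'; exact hw0 (funext h')
    obtain ⟨u, hu⟩ := hw2
    have hfw : f w = w := by
      have h2 := (LinearMap.mem_ker).1 hw1
      have h3 : f w - w = 0 := by simpa using h2
      linear_combination (norm := module) h3
    have hfu : f u = u + w := by
      have h3 : f u - u = w := by simpa using hu
      linear_combination (norm := module) h3
    have hiter : ∀ n : ℕ, (f ^ n) u = u + (n : ℂ) • w := by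
      intro n
      induction n with
      | zero => simp
      | succ n ih =>
        rw [pow_succ', Module.End.mul_apply, ih]
        rw [map_add, _root_.map_smul, hfu, hfw]
        push_cast
        module
    set S : ℝ := ∑ k, ‖u k‖ with hS
    have hC0 : (0 : ℝ) ≤ C := le_trans (norm_nonneg _) (hCB 0 j j)
    have hbd : ∀ n : ℕ, ‖((f ^ n) u) j‖ ≤ C * S := by
      intro n
      rw [hfpow]
      have : ((B ^ n) *ᵥ u) j = ∑ k, (B ^ n) j k * u k := rfl
      rw [this]
      calc ‖∑ k, (B ^ n) j k * u k‖ ≤ ∑ k, ‖(B ^ n) j k * u k‖ := norm_sum_le _ _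
      _ ≤ ∑ k, C * ‖u k‖ := by
          refine Finset.sum_le_sum fun k _ => ?_
          rw [norm_mul]
          exact mul_le_mul_of_nonneg_right (hCB n j k) (norm_nonneg _)
      _ = C * S := by rw [hS, Finset.mul_sum]
    obtain ⟨n, hn⟩ := exists_nat_gt ((C * S + ‖u j‖) / ‖w j‖)
    have hwj : (0 : ℝ) < ‖w j‖ := norm_pos_iff.2 hj
    have hgt : C * S + ‖u j‖ < n * ‖w j‖ := by
      rw [div_lt_iff₀ hwj] at hn; linarith
    have hval : ((f ^ n) u) j = u j + (n : ℂ) * w j := by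
      rw [hiter n]; simp
    have hlow : (n : ℝ) * ‖w j‖ - ‖u j‖ ≤ ‖((f ^ n) u) j‖ := by
      rw [hval]
      have h4 : ‖(n : ℂ) * w j‖ ≤ ‖u j + (n : ℂ) * w j‖ + ‖u j‖ := by
        calc ‖(n : ℂ) * w j‖ = ‖(u j + (n : ℂ) * w j) - u j‖ := by ring_nf
        _ ≤ ‖u j + (n : ℂ) * w j‖ + ‖u j‖ := norm_sub_le _ _
      have h5 : ‖(n : ℂ) * w j‖ = (n : ℝ) * ‖w j‖ := by
        rw [norm_mul]; norm_num
      linarith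
    linarith [hbd n]
  -- invariance of the range
  have hinv : ∀ x ∈ rng, f x ∈ rng := by
    rintro x ⟨u, rfl⟩
    refine ⟨f u, ?_⟩
    simp only [LinearMap.sub_apply, Module.End.one_apply, map_sub]
  set g : rng →ₗ[ℂ] rng := f.restrict hinv with hg
  set G : rng →L[ℂ] rng := LinearMap.toContinuousLinearMap g with hG
  have hGapp : ∀ x : rng, (G x : Fin m → ℂ) = f x := fun x => rfl
  have hGpow : ∀ (n : ℕ) (x : rng), ((G ^ n) x : Fin m → ℂ) = (f ^ n) (x : Fin m → ℂ) := by
    intro n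
    induction n with
    | zero => intro x; simp
    | succ n ih =>
      intro x
      rw [pow_succ, ContinuousLinearMap.mul_apply, ih (G x), hGapp, pow_succ,
        Module.End.mul_apply]
  -- eigenvalues of G are < 1 in modulus
  have heig : ∀ μ : ℂ, (∃ v : rng, v ≠ 0 ∧ G v = μ • v) → ‖μ‖ < 1 := by
    rintro μ ⟨v, hv0, hveq⟩
    have hvc : (v : Fin m → ℂ) ≠ 0 := fun h => hv0 (Subtype.ext h)
    have hfv : f (v : Fin m → ℂ) = μ • (v : Fin m → ℂ) := by
      have := congrArg (Subtype.val) hveq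
      rw [hGapp] at this
      simpa using this
    have hμspec : μ ∈ spectrum ℂ B := by
      rw [← AlgEquiv.spectrum_eq (Matrix.toLinAlgEquiv' (R := ℂ) (n := Fin m)) B, ← hf]
      exact Module.End.HasEigenvalue.mem_spectrum
        (Module.End.hasEigenvalue_of_hasEigenvector
          ⟨Module.End.mem_eigenspace_iff.2 hfv, hvc⟩)
    obtain ⟨h1, h2⟩ := hspec μ hμspec
    refine lt_of_le_of_ne h1 fun he => ?_
    have hμ1 : μ = 1 := h2 he
    rw [hμ1, one_smul] at hfv
    have hvker : (v : Fin m → ℂ) ∈ ker₁ := by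
      rw [hker, LinearMap.mem_ker]
      simp [LinearMap.sub_apply, hfv]
    exact hvc (Submodule.disjoint_def.1 hdisj _ hvker v.2)
  have hzero : ∀ w : rng, Tendsto (fun n : ℕ => ((G ^ n) w : Fin m → ℂ)) atTop (nhds 0) := by
    intro w
    have h0 := clm_pow_tendsto_zero G heig w
    have := (continuous_subtype_val.tendsto (0 : rng)).comp h0
    simpa [Function.comp_def] using this
  -- decomposition and convergence
  have hdim : Module.finrank ℂ rng + Module.finrank ℂ ker₁ = Module.finrank ℂ (Fin m → ℂ) :=
    LinearMap.finrank_range_add_finrank_ker (f - 1)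
  have hsup : rng ⊔ ker₁ = ⊤ :=
    Submodule.eq_top_of_disjoint _ _ hdim.ge hdisj.symm
  have hvlim : ∀ v : Fin m → ℂ, ∃ p, Tendsto (fun n : ℕ => (B ^ n) *ᵥ v) atTop (nhds p) := by
    intro v
    have hv : v ∈ rng ⊔ ker₁ := hsup ▸ Submodule.mem_top
    obtain ⟨w, hw, p, hp, rfl⟩ := Submodule.mem_sup.1 hv
    refine ⟨p, ?_⟩
    have hfp : ∀ n : ℕ, (f ^ n) p = p := by
      intro n
      induction n with
      | zero => rfl
      | succ n ih =>
        rw [pow_succ', Module.End.mul_apply, ih]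
        have h2 := (LinearMap.mem_ker).1 hp
        have h3 : f p - p = 0 := by simpa using h2
        linear_combination (norm := module) h3
    have heq : ∀ n : ℕ, (B ^ n) *ᵥ (w + p) = ((G ^ n) ⟨w, hw⟩ : Fin m → ℂ) + p := by
      intro n
      rw [← hfpow, map_add, hfp n, hGpow n ⟨w, hw⟩]
    simp only [heq]
    simpa using (hzero ⟨w, hw⟩).add (tendsto_const_nhds (x := p))
  -- entrywise convergence of the real powers
  have hconv : ∀ i j : Fin m, ∃ x : ℝ, Tendsto (fun k : ℕ => (A ^ k) i j) atTop (nhds x) := by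
    intro i j
    obtain ⟨p, hp⟩ := hvlim (Pi.single j 1)
    refine ⟨(p i).re, ?_⟩
    have h1 : Tendsto (fun k : ℕ => ((B ^ k) *ᵥ Pi.single j 1) i) atTop (nhds (p i)) :=
      (tendsto_pi_nhds.1 hp) i
    have h2 : ∀ k : ℕ, ((B ^ k) *ᵥ Pi.single j 1) i = ((A ^ k) i j : ℂ) := by
      intro k
      rw [mulVec_single, hBpow]
      simp [Matrix.map_apply]
    simp only [h2] at h1
    have h3 := (Complex.continuous_re.tendsto (((p i)))).comp h1
    simpa [Function.comp_def] using h3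
  choose Pf hPf using hconv
  have hPP : Matrix.of Pf * Matrix.of Pf = Matrix.of Pf := by
    ext i j
    have h2k : Tendsto (fun k : ℕ => 2 * k) atTop atTop :=
      tendsto_atTop_mono (fun n => (by omega : n ≤ 2 * n)) tendsto_id
    have h1 : Tendsto (fun k : ℕ => (A ^ (2 * k)) i j) atTop (nhds (Pf i j)) :=
      (hPf i j).comp h2k
    have h2 : Tendsto (fun k : ℕ => (A ^ (2 * k)) i j) atTop
        (nhds ((Matrix.of Pf * Matrix.of Pf) i j)) := by
      have : ∀ k : ℕ, (A ^ (2 * k)) i j = ∑ l, (A ^ k) i l * (A ^ k) l j := by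
        intro k; rw [two_mul, pow_add]; rfl
      simp only [this]
      have : Tendsto (fun k : ℕ => ∑ l, (A ^ k) i l * (A ^ k) l j) atTop
          (nhds (∑ l, Pf i l * Pf l j)) :=
        tendsto_finset_sum _ fun l _ => (hPf i l).mul (hPf l j)
      simpa [Matrix.mul_apply] using this
    exact tendsto_nhds_unique h2 h1
  have hAP : A * Matrix.of Pf = Matrix.of Pf := by
    ext i j
    have h1 : Tendsto (fun k : ℕ => (A ^ (k + 1)) i j) atTop (nhds (Pf i j)) :=
      (hPf i j).comp (tendsto_add_atTop_nat 1)
    have h2 : Tendsto (fun k : ℕ => (A ^ (k + 1)) i j) atTop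
        (nhds ((A * Matrix.of Pf) i j)) := by
      have he : ∀ k : ℕ, (A ^ (k + 1)) i j = ∑ l, A i l * (A ^ k) l j := by
        intro k; rw [pow_succ']; rfl
      simp only [he]
      have : Tendsto (fun k : ℕ => ∑ l, A i l * (A ^ k) l j) atTop
          (nhds (∑ l, A i l * Pf l j)) :=
        tendsto_finset_sum _ fun l _ => tendsto_const_nhds.mul (hPf l j)
      simpa [Matrix.mul_apply] using this
    exact tendsto_nhds_unique h2 h1
  have hPA : Matrix.of Pf * A = Matrix.of Pf := by
    ext i j
    have h1 : Tendsto (fun k : ℕ => (A ^ (k + 1)) i j) atTop (nhds (Pf i j)) :=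
      (hPf i j).comp (tendsto_add_atTop_nat 1)
    have h2 : Tendsto (fun k : ℕ => (A ^ (k + 1)) i j) atTop
        (nhds ((Matrix.of Pf * A) i j)) := by
      have he : ∀ k : ℕ, (A ^ (k + 1)) i j = ∑ l, (A ^ k) i l * A l j := by
        intro k; rw [pow_succ]; rfl
      simp only [he]
      have : Tendsto (fun k : ℕ => ∑ l, (A ^ k) i l * A l j) atTop
          (nhds (∑ l, Pf i l * A l j)) :=
        tendsto_finset_sum _ fun l _ => (hPf i l).mul tendsto_const_nhds
      simpa [Matrix.mul_apply] using this
    exact tendsto_nhds_unique h2 h1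
  refine ⟨Matrix.of Pf, fun i j => hPf i j, hPP, hAP, hPA, ?_⟩
  intro v
  constructor
  · intro hPv
    conv_lhs => rw [← hPv]
    rw [Matrix.mulVec_mulVec, hAP, hPv]
  · intro hAv
    have hAk : ∀ k : ℕ, (A ^ k) *ᵥ v = v := by
      intro k
      induction k with
      | zero => simp
      | succ k ih => rw [pow_succ, ← Matrix.mulVec_mulVec, hAv, ih]
    funext j
    have h1 : Tendsto (fun k : ℕ => ((A ^ k) *ᵥ v) j) atTop
        (nhds ((Matrix.of Pf *ᵥ v) j)) := by
      have he : ∀ k : ℕ, ((A ^ k) *ᵥ v) j = ∑ l, (A ^ k) j l * v l := fun k => rfl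
      simp only [he]
      have : Tendsto (fun k : ℕ => ∑ l, (A ^ k) j l * v l) atTop
          (nhds (∑ l, Pf j l * v l)) :=
        tendsto_finset_sum _ fun l _ => (hPf j l).mul tendsto_const_nhds
      simpa [Matrix.mulVec, dotProduct] using this
    have h2 : Tendsto (fun k : ℕ => ((A ^ k) *ᵥ v) j) atTop (nhds (v j)) := by
      simp only [hAk]; exact tendsto_const_nhds
    exact tendsto_nhds_unique h1 h2
end

section
/- Let 𝒜 be a real *-subalgebra of M_n(ℂ), let ω ∈ M_n(ℂ) be positive definite with ω A = A ω for every A ∈ 𝒜, and let Π be the orthogonal projection of M_n(ℂ) onto 𝒜 with respect to the real Hilbert–Schmidt inner product. Define β(B) := Π(ω^{1/2} B ω^{1/2}) for B ∈ M_n(ℂ), where ω^{1/2} is the positive definite square root of ω. Then β is a real conditional expectation onto 𝒜. Moreover, for every Hermitian X ∈ M_n(ℂ) whose orthogonal projection onto 𝒜 equals X ω⁻¹, one has Re Tr(X β(B)) = Re Tr(X B) for all B ∈ M_n(ℂ). -/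
open Matrix Complex Filter
open scoped ComplexOrder

/-- The positive semidefinite square root of a positive semidefinite matrix
(the former Mathlib `Matrix.PosSemidef.sqrt`, restated verbatim). -/
noncomputable def posSemidefSqrt {n : ℕ} {A : Mat n} (hA : A.PosSemidef) : Mat n :=
  hA.1.eigenvectorUnitary.1 * diagonal ((↑) ∘ Real.sqrt ∘ hA.1.eigenvalues) *
  (star hA.1.eigenvectorUnitary : Mat n)

lemma stmt15_sqrt_mul_self {n : ℕ} {A : Mat n} (hA : A.PosSemidef) :
    posSemidefSqrt hA * posSemidefSqrt hA = A := by
  have h2 : star (hA.1.eigenvectorUnitary : Mat n) * hA.1.eigenvectorUnitary = 1 :=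
    Matrix.mem_unitaryGroup_iff'.mp hA.1.eigenvectorUnitary.2
  unfold posSemidefSqrt
  conv_rhs => rw [hA.1.spectral_theorem, Unitary.conjStarAlgAut_apply]
  simp only [mul_assoc, Unitary.coe_star]
  rw [← mul_assoc (star _) (hA.1.eigenvectorUnitary : Mat n), h2, one_mul,
    ← mul_assoc (diagonal _), diagonal_mul_diagonal]
  congr 3
  funext i
  simp [← Complex.ofReal_mul, Real.mul_self_sqrt (hA.eigenvalues_nonneg i)]

lemma stmt15_sqrt_psd {n : ℕ} {A : Mat n} (hA : A.PosSemidef) :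
    (posSemidefSqrt hA).PosSemidef := by
  unfold posSemidefSqrt
  have := ((posSemidef_diagonal_iff (d := (((↑) ∘ Real.sqrt ∘ hA.1.eigenvalues) : Fin n → ℂ))).mpr
    fun i => ?_).mul_mul_conjTranspose_same (hA.1.eigenvectorUnitary : Mat n)
  · simpa [Unitary.coe_star, Matrix.star_eq_conjTranspose] using this
  · exact Complex.zero_le_real.mpr (Real.sqrt_nonneg _)

section Aux

open Polynomial

lemma stmt15_re_tr_symm {n : ℕ} (G H : Mat n) :
    ((Gᴴ * H).trace).re = ((Hᴴ * G).trace).re := by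
  have : Hᴴ * G = (Gᴴ * H)ᴴ := by rw [conjTranspose_mul, conjTranspose_conjTranspose]
  rw [this, trace_conjTranspose]
  simp [Complex.star_def]

lemma stmt15_eq_zero {n : ℕ} {E : Mat n} (h : ((Eᴴ * E).trace).re = 0) : E = 0 := by
  have key : ∑ i, ∑ j, Complex.normSq (E j i) = 0 := by
    rw [← h]
    simp only [Matrix.trace, Matrix.diag, Matrix.mul_apply, Matrix.conjTranspose_apply,
      Complex.re_sum]
    refine Finset.sum_congr rfl fun i _ => Finset.sum_congr rfl fun j _ => ?_
    simp [Complex.normSq_apply, Complex.mul_re]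
  have := (Finset.sum_eq_zero_iff_of_nonneg (fun i _ =>
    Finset.sum_nonneg fun j _ => Complex.normSq_nonneg _)).mp key
  ext i j
  have h2 := (Finset.sum_eq_zero_iff_of_nonneg (fun j _ => Complex.normSq_nonneg _)).mp
    (this j (Finset.mem_univ j)) i (Finset.mem_univ i)
  simpa using Complex.normSq_eq_zero.mp h2

lemma stmt15_trace_re_nonneg {n : ℕ} {A : Mat n} (hA : A.PosSemidef) : 0 ≤ (A.trace).re := by
  have hd : ∀ i, 0 ≤ (A i i).re := by
    intro i
    have := hA.re_dotProduct_nonneg (Pi.single i 1)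
    simpa [dotProduct, Matrix.mulVec, Pi.single_apply] using this
  rw [Matrix.trace, Complex.re_sum]
  exact Finset.sum_nonneg fun i _ => hd i

lemma stmt15_trace_mul_re_nonneg {n : ℕ} {A B : Mat n} (hA : A.PosSemidef) (hB : B.PosSemidef) :
    0 ≤ ((A * B).trace).re := by
  classical
  set T := posSemidefSqrt hA with hT
  have hTT : T * T = A := stmt15_sqrt_mul_self hA
  have hTh : Tᴴ = T := (stmt15_sqrt_psd hA).1
  have h1 : (A * B).trace = (Tᴴ * B * T).trace := by
    rw [hTh, ← hTT, mul_assoc, trace_mul_comm]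
  rw [h1]
  exact stmt15_trace_re_nonneg (hB.conjTranspose_mul_mul_same T)

lemma stmt15_trace_conj {n : ℕ} {U : Mat n} (h2 : star U * U = 1) (D : Mat n) :
    (U * D * star U).trace = D.trace := by
  rw [trace_mul_comm, ← mul_assoc, h2, one_mul]

/-- Conjugation by a unitary as a real algebra homomorphism. -/
noncomputable def stmt15_conjAlgHom {n : ℕ} (U : Mat n) (h1 : U * star U = 1)
    (h2 : star U * U = 1) : Mat n →ₐ[ℝ] Mat n where
  toFun X := U * X * star U
  map_one' := by show U * 1 * star U = 1; rw [mul_one, h1]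
  map_mul' X Y := by
    show U * (X * Y) * star U = U * X * star U * (U * Y * star U)
    calc U * (X * Y) * star U = U * X * (star U * U) * (Y * star U) := by
          rw [h2]; noncomm_ring
      _ = U * X * star U * (U * Y * star U) := by noncomm_ring
  map_zero' := by simp
  map_add' X Y := by
    show U * (X + Y) * star U = U * X * star U + U * Y * star U
    noncomm_ring
  commutes' r := by
    show U * algebraMap ℝ (Mat n) r * star U = algebraMap ℝ (Mat n) r
    rw [Algebra.algebraMap_eq_smul_one, mul_smul_comm, mul_one, smul_mul_assoc, h1]

lemma stmt15_aeval_hermitian {n : ℕ} {M : Mat n} (hM : M.IsHermitian) (p : ℝ[X]) :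
    (aeval M p : Mat n) =
      (hM.eigenvectorUnitary : Mat n)
        * Matrix.diagonal (fun i => ((p.eval (hM.eigenvalues i) : ℝ) : ℂ))
        * star (hM.eigenvectorUnitary : Mat n) := by
  set U : Mat n := (hM.eigenvectorUnitary : Mat n) with hU
  have h1 : U * star U = 1 := Matrix.mem_unitaryGroup_iff.mp hM.eigenvectorUnitary.2
  have h2 : star U * U = 1 := Matrix.mem_unitaryGroup_iff'.mp hM.eigenvectorUnitary.2
  have key : M = stmt15_conjAlgHom U h1 h2
      ((Matrix.diagonalAlgHom ℝ) (fun i => algebraMap ℝ ℂ (hM.eigenvalues i))) := by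
    have := hM.spectral_theorem
    simp at this
    exact this
  have hinner : (aeval (fun i => algebraMap ℝ ℂ (hM.eigenvalues i)) p : Fin n → ℂ)
      = fun i => ((p.eval (hM.eigenvalues i) : ℝ) : ℂ) := by
    funext i
    calc (aeval (fun i => algebraMap ℝ ℂ (hM.eigenvalues i)) p) i
        = aeval (algebraMap ℝ ℂ (hM.eigenvalues i)) p :=
          (aeval_algHom_apply (Pi.evalAlgHom ℝ (fun _ => ℂ) i)
            (fun i => algebraMap ℝ ℂ (hM.eigenvalues i)) p).symm
      _ = ((p.eval (hM.eigenvalues i) : ℝ) : ℂ) := by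
          rw [aeval_algebraMap_apply_eq_algebraMap_eval]
          simp
  conv_lhs => rw [key]
  rw [aeval_algHom_apply, aeval_algHom_apply]
  show U * _ * star U = _
  rw [show ((Matrix.diagonalAlgHom ℝ) (aeval (fun i => algebraMap ℝ ℂ (hM.eigenvalues i)) p) : Mat n)
      = Matrix.diagonal (aeval (fun i => algebraMap ℝ ℂ (hM.eigenvalues i)) p) from rfl, hinner]

/-- real-polynomial functional calculus stays in the *-subalgebra -/
lemma stmt15_aeval_mem {n : ℕ} {𝒜 : Set (Mat n)}
    (hadd : ∀ A ∈ 𝒜, ∀ B ∈ 𝒜, A + B ∈ 𝒜)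
    (hsmul : ∀ (r : ℝ), ∀ A ∈ 𝒜, r • A ∈ 𝒜)
    (hmul : ∀ A ∈ 𝒜, ∀ B ∈ 𝒜, A * B ∈ 𝒜)
    (hone : (1 : Mat n) ∈ 𝒜)
    {M : Mat n} (hM : M ∈ 𝒜) (p : ℝ[X]) : (aeval M p : Mat n) ∈ 𝒜 := by
  induction p using Polynomial.induction_on with
  | C a => rw [aeval_C, Algebra.algebraMap_eq_smul_one]; exact hsmul a _ hone
  | add p q hp hq => rw [map_add]; exact hadd _ hp _ hq
  | monomial a k ih =>
    rw [pow_succ, ← mul_assoc, _root_.map_mul, aeval_X]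
    exact hmul _ ih _ hM

/-- A Hermitian member of the algebra pairing nonnegatively with all psd members
of the algebra is psd. -/
lemma stmt15_psd_of_trace {n : ℕ} {𝒜 : Set (Mat n)} (h𝒜 : IsRealStarSubalgebra 𝒜)
    {M : Mat n} (hMA : M ∈ 𝒜) (hM : M.IsHermitian)
    (h : ∀ D ∈ 𝒜, D.PosSemidef → 0 ≤ ((M * D).trace).re) : M.PosSemidef := by
  classical
  obtain ⟨hadd, hsmul, hmul, hstar, hone⟩ := h𝒜
  set U : Mat n := (hM.eigenvectorUnitary : Mat n) with hU
  have h1 : U * star U = 1 := Matrix.mem_unitaryGroup_iff.mp hM.eigenvectorUnitary.2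
  have h2 : star U * U = 1 := Matrix.mem_unitaryGroup_iff'.mp hM.eigenvectorUnitary.2
  set μ : Fin n → ℝ := hM.eigenvalues with hμ
  set p : ℝ[X] := Lagrange.interpolate (Finset.univ.image μ) id (fun x => max 0 (-x)) with hp
  have hpeval : ∀ i, p.eval (μ i) = max 0 (-(μ i)) := by
    intro i
    have := Lagrange.eval_interpolate_at_node (s := Finset.univ.image μ) (v := id)
      (fun x => max 0 (-x)) (Set.injOn_id _) (Finset.mem_image_of_mem μ (Finset.mem_univ i))
    rw [hp]
    simpa using this
  set N : Mat n := aeval M p with hN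
  have hNmem : N ∈ 𝒜 := stmt15_aeval_mem hadd hsmul hmul hone hMA p
  have hNd : N = U * Matrix.diagonal (fun i => ((max 0 (-(μ i)) : ℝ) : ℂ)) * star U := by
    rw [hN, stmt15_aeval_hermitian hM p]
    exact congrArg (fun d => U * Matrix.diagonal d * star U) (funext fun i => congrArg _ (hpeval i))
  have hdiag : (Matrix.diagonal (fun i => ((max 0 (-(μ i)) : ℝ) : ℂ))).PosSemidef :=
    Matrix.posSemidef_diagonal_iff.mpr fun i => by
      exact Complex.zero_le_real.mpr (le_max_left 0 (-(μ i)))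
  have hNpsd : N.PosSemidef := by
    have := hdiag.mul_mul_conjTranspose_same U
    rw [hNd, Matrix.star_eq_conjTranspose]
    exact this
  have hMd : M = U * Matrix.diagonal (fun i => ((μ i : ℝ) : ℂ)) * star U := by
    have := hM.spectral_theorem
    simp at this
    exact this
  have hconjmul : ∀ D1 D2 : Mat n, (U*D1*star U)*(U*D2*star U) = U*(D1*D2)*star U := by
    intro D1 D2
    calc (U*D1*star U)*(U*D2*star U) = U*D1*(star U*U)*(D2*star U) := by noncomm_ring
      _ = U*(D1*D2)*star U := by rw [h2]; noncomm_ring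
  have hprod : M * N
      = U * Matrix.diagonal (fun i => ((μ i * max 0 (-(μ i)) : ℝ) : ℂ)) * star U := by
    rw [hMd, hNd, hconjmul, Matrix.diagonal_mul_diagonal]
    congr 2
    funext i
    push_cast
    ring
  have htr : ((M * N).trace).re = ∑ i, (μ i * max 0 (-(μ i))) := by
    rw [hprod, stmt15_trace_conj h2, Matrix.trace_diagonal, Complex.re_sum]
    simp
  have hineq := h N hNmem hNpsd
  rw [htr] at hineq
  have hxc : ∀ x : ℝ, x * max 0 (-x) = -((max 0 (-x))^2) := by
    intro x
    rcases le_total 0 x with hx | hx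
    · rw [max_eq_left (by linarith)]; ring
    · rw [max_eq_right (by linarith)]; ring
  have hsum0 : ∑ i, (max 0 (-(μ i)))^2 = 0 := by
    have he : ∑ i, (μ i * max 0 (-(μ i))) = -∑ i, (max 0 (-(μ i)))^2 := by
      rw [← Finset.sum_neg_distrib]
      exact Finset.sum_congr rfl fun i _ => hxc (μ i)
    rw [he] at hineq
    have := Finset.sum_nonneg (fun i (_ : i ∈ Finset.univ) => sq_nonneg (max 0 (-(μ i))))
    linarith
  have hzero : ∀ i, max 0 (-(μ i)) = 0 := by
    intro i
    have := (Finset.sum_eq_zero_iff_of_nonneg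
      (fun i _ => sq_nonneg (max 0 (-(μ i))))).mp hsum0 i (Finset.mem_univ i)
    exact pow_eq_zero_iff (two_ne_zero) |>.mp this
  refine hM.posSemidef_iff_eigenvalues_nonneg.mpr (Pi.le_def.mpr fun i => (?_ : (0:ℝ) ≤ μ i))
  have hle := le_max_right 0 (-(μ i))
  rw [hzero i] at hle
  linarith

/-- A matrix commuting with a positive definite matrix commutes with its square root. -/
lemma stmt15_sqrt_comm {n : ℕ} {ω : Mat n} (hω : ω.PosDef) {X : Mat n}
    (hX : ω * X = X * ω) :
    posSemidefSqrt hω.posSemidef * X = X * posSemidefSqrt hω.posSemidef := by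
  classical
  set S := posSemidefSqrt hω.posSemidef with hS
  have hSS : S * S = ω := stmt15_sqrt_mul_self hω.posSemidef
  have hSpsd : S.PosSemidef := stmt15_sqrt_psd hω.posSemidef
  have hSh : Sᴴ = S := hSpsd.1
  set T := posSemidefSqrt hSpsd with hT
  have hTT : T * T = S := stmt15_sqrt_mul_self hSpsd
  have hTh : Tᴴ = T := (stmt15_sqrt_psd hSpsd).1
  set Z := S * X - X * S with hZ
  have hanti : S * Z = -(Z * S) := by
    have hsum : S * Z + Z * S = ω * X - X * ω := by rw [hZ, ← hSS]; noncomm_ring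
    rw [hX, sub_self] at hsum
    exact eq_neg_of_add_eq_zero_left hsum
  have hc1 : Zᴴ * S * Z * S = -(Zᴴ * Z * ω) := by
    rw [mul_assoc Zᴴ S Z, hanti, ← hSS]
    noncomm_ring
  have hc2 : ((T * Z * T)ᴴ * (T * Z * T)).trace = (Zᴴ * S * Z * S).trace := by
    have he : (T * Z * T)ᴴ * (T * Z * T) = T * (Zᴴ * S * Z) * T := by
      rw [conjTranspose_mul, conjTranspose_mul, hTh, ← hTT]
      noncomm_ring
    rw [he, trace_mul_comm (T * (Zᴴ * S * Z)) T, ← mul_assoc, hTT,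
      trace_mul_comm S (Zᴴ * S * Z)]
  have hc3 : ((Z * S)ᴴ * (Z * S)).trace = (Zᴴ * Z * ω).trace := by
    have he : (Z * S)ᴴ * (Z * S) = S * (Zᴴ * Z) * S := by
      rw [conjTranspose_mul, hSh]
      noncomm_ring
    rw [he, trace_mul_comm (S * (Zᴴ * Z)) S, ← mul_assoc, hSS, trace_mul_comm ω (Zᴴ * Z)]
  have hb0 : (((Z * S)ᴴ * (Z * S)).trace).re = 0 := by
    have hA := stmt15_trace_re_nonneg (Matrix.posSemidef_conjTranspose_mul_self (T * Z * T))
    have hB := stmt15_trace_re_nonneg (Matrix.posSemidef_conjTranspose_mul_self (Z * S))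
    have : (((T * Z * T)ᴴ * (T * Z * T)).trace).re = -((((Z * S)ᴴ * (Z * S)).trace).re) := by
      rw [hc2, hc1, Matrix.trace_neg, ← hc3, Complex.neg_re]
    linarith
  have hZS : Z * S = 0 := stmt15_eq_zero hb0
  have hZω : Z * ω = 0 := by rw [← hSS, ← mul_assoc, hZS, zero_mul]
  have hdet : IsUnit ω.det := (Matrix.isUnit_iff_isUnit_det ω).mp hω.isUnit
  have hZ0 : Z = 0 := by
    have := congrArg (fun A => A * ω⁻¹) hZω
    simpa [mul_assoc, Matrix.mul_nonsing_inv ω hdet] using this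
  have := sub_eq_zero.mp (hZ.symm ▸ hZ0)
  exact this

end Aux

/-- Let `𝒜` be a real `*`-subalgebra, `ω` positive definite commuting with
every element of `𝒜`, and `P` the orthogonal projection onto `𝒜` (w.r.t. the real
Hilbert–Schmidt inner product). Then `β(B) := P(ω^{1/2} B ω^{1/2})` is a real conditional
expectation onto `𝒜`; and for every Hermitian `X` whose orthogonal projection onto `𝒜`
equals `X ω⁻¹`, one has `Re Tr(X β(B)) = Re Tr(X B)` for all `B`. -/
theorem stmt15 {n : ℕ} (𝒜 : Set (Mat n)) (h𝒜 : IsRealStarSubalgebra 𝒜)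
    (ω : Mat n) (hω : ω.PosDef) (hcomm : ∀ A ∈ 𝒜, ω * A = A * ω)
    (P : Mat n →ₗ[ℝ] Mat n)
    (hPmem : ∀ B : Mat n, P B ∈ 𝒜)
    (hPorth : ∀ A ∈ 𝒜, ∀ B : Mat n, ((Aᴴ * (B - P B)).trace).re = 0) :
    (∀ B : Mat n, B.PosSemidef →
      (P ((posSemidefSqrt hω.posSemidef) * B * (posSemidefSqrt hω.posSemidef))).PosSemidef) ∧
    (∀ B : Mat n, P ((posSemidefSqrt hω.posSemidef) * B * (posSemidefSqrt hω.posSemidef)) ∈ 𝒜) ∧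
    (∀ A ∈ 𝒜, ∀ B : Mat n,
      P ((posSemidefSqrt hω.posSemidef) * (A * B) * (posSemidefSqrt hω.posSemidef)) =
        A * P ((posSemidefSqrt hω.posSemidef) * B * (posSemidefSqrt hω.posSemidef))) ∧
    (∀ X : Mat n, X.IsHermitian → P X = X * ω⁻¹ →
      ∀ B : Mat n,
        ((X * P ((posSemidefSqrt hω.posSemidef) * B * (posSemidefSqrt hω.posSemidef))).trace).re =
          ((X * B).trace).re) := by
  classical
  obtain ⟨hadd, hsmul, hmul, hstar, hone⟩ := h𝒜
  set S := posSemidefSqrt hω.posSemidef with hSdef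
  have hSS : S * S = ω := stmt15_sqrt_mul_self hω.posSemidef
  have hSh : Sᴴ = S := (stmt15_sqrt_psd hω.posSemidef).1
  have hsub : ∀ A ∈ 𝒜, ∀ B ∈ 𝒜, A - B ∈ 𝒜 := by
    intro A hA B hB
    have := hadd A hA _ (hsmul (-1) B hB)
    simpa [neg_smul, sub_eq_add_neg] using this
  -- orthogonality restated
  have hPE : ∀ A ∈ 𝒜, ∀ B : Mat n, ((Aᴴ * P B).trace).re = ((Aᴴ * B).trace).re := by
    intro A hA B
    have := hPorth A hA B
    rw [mul_sub, trace_sub] at this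
    have : ((Aᴴ * B).trace).re - ((Aᴴ * P B).trace).re = 0 := by
      simpa [Complex.sub_re] using this
    linarith
  -- uniqueness
  have huniq : ∀ E ∈ 𝒜, (∀ A ∈ 𝒜, ((Aᴴ * E).trace).re = 0) → E = 0 := by
    intro E hE h
    exact stmt15_eq_zero (h E hE)
  -- module property of P
  have hmod : ∀ A ∈ 𝒜, ∀ C : Mat n, P (A * C) = A * P C := by
    intro A hA C
    have hmem : P (A * C) - A * P C ∈ 𝒜 := hsub _ (hPmem _) _ (hmul A hA _ (hPmem C))
    have hz : ∀ D ∈ 𝒜, ((Dᴴ * (P (A * C) - A * P C)).trace).re = 0 := by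
      intro D hD
      rw [mul_sub, trace_sub]
      have e1 : ((Dᴴ * P (A * C)).trace).re = ((Dᴴ * (A * C)).trace).re := hPE D hD (A * C)
      have e2 : ((Dᴴ * (A * P C)).trace).re = ((Dᴴ * (A * C)).trace).re := by
        have h3 : Dᴴ * (A * P C) = (Aᴴ * D)ᴴ * P C := by
          rw [conjTranspose_mul, conjTranspose_conjTranspose, mul_assoc]
        have h4 : Dᴴ * (A * C) = (Aᴴ * D)ᴴ * C := by
          rw [conjTranspose_mul, conjTranspose_conjTranspose, mul_assoc]
        rw [h3, h4]
        exact hPE _ (hmul _ (hstar A hA) _ hD) C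
      simp [Complex.sub_re, e1, e2]
    have := huniq _ hmem hz
    exact sub_eq_zero.mp this
  -- commutes with sqrt
  have hScomm : ∀ A ∈ 𝒜, S * A = A * S := fun A hA => stmt15_sqrt_comm hω (hcomm A hA)
  -- Hermitian preservation
  have hherm : ∀ C : Mat n, Cᴴ = C → (P C)ᴴ = P C := by
    intro C hC
    set M := P C with hM
    have hmem : Mᴴ - M ∈ 𝒜 := hsub _ (hstar _ (hPmem C)) _ (hPmem C)
    have hz : ∀ A ∈ 𝒜, ((Aᴴ * (Mᴴ - M)).trace).re = 0 := by
      intro A hA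
      rw [mul_sub, trace_sub]
      have e1 : ((Aᴴ * Mᴴ).trace).re = ((Aᴴ * M).trace).re := by
        calc ((Aᴴ * Mᴴ).trace).re
            = ((Mᴴᴴ * A).trace).re := stmt15_re_tr_symm A Mᴴ
          _ = ((Aᴴᴴ * M).trace).re := by
              rw [conjTranspose_conjTranspose, conjTranspose_conjTranspose, trace_mul_comm]
          _ = ((Aᴴᴴ * C).trace).re := hPE Aᴴ (hstar A hA) C
          _ = ((Cᴴ * Aᴴ).trace).re := stmt15_re_tr_symm Aᴴ C
          _ = ((Aᴴ * C).trace).re := by rw [hC, trace_mul_comm]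
          _ = ((Aᴴ * M).trace).re := (hPE A hA C).symm
      simp [Complex.sub_re, e1]
    have := huniq _ hmem hz
    exact sub_eq_zero.mp this
  -- part 1 : positivity
  have hpos : ∀ B : Mat n, B.PosSemidef → (P (S * B * S)).PosSemidef := by
    intro B hB
    have hCpsd : (S * B * S).PosSemidef := by
      have := hB.mul_mul_conjTranspose_same S
      rwa [hSh] at this
    have hMherm : (P (S * B * S)).IsHermitian := hherm _ hCpsd.1
    refine stmt15_psd_of_trace ⟨hadd, hsmul, hmul, hstar, hone⟩ (hPmem _) hMherm ?_
    intro D hD hDpsd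
    have e1 : ((P (S * B * S) * D).trace).re = ((D * (S * B * S)).trace).re := by
      calc ((P (S * B * S) * D).trace).re
          = ((Dᴴ * P (S * B * S)).trace).re := by
            conv_lhs => rw [show P (S * B * S) * D = P (S * B * S) * Dᴴ from by rw [hDpsd.1]]
            rw [trace_mul_comm]
        _ = ((Dᴴ * (S * B * S)).trace).re := hPE D hD _
        _ = ((D * (S * B * S)).trace).re := by rw [hDpsd.1]
    rw [e1]
    exact stmt15_trace_mul_re_nonneg hDpsd hCpsd
  refine ⟨hpos, fun B => hPmem _, ?_, ?_⟩
  · -- module property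
    intro A hA B
    have hABS : S * (A * B) * S = A * (S * B * S) := by
      rw [← mul_assoc, hScomm A hA]
      simp [mul_assoc]
    rw [hABS, hmod A hA]
  · -- the trace identity
    intro X hXh hPX B
    have hY : X * ω⁻¹ ∈ 𝒜 := hPX ▸ hPmem X
    have hdet : IsUnit ω.det := (Matrix.isUnit_iff_isUnit_det ω).mp hω.isUnit
    have hωinv : ω * ω⁻¹ = 1 := Matrix.mul_nonsing_inv ω hdet
    have hinv2 : ω⁻¹ * ω = 1 := Matrix.nonsing_inv_mul ω hdet
    have h1 : (X * ω⁻¹) * ω = X := by rw [mul_assoc, hinv2, mul_one]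
    have hXω : ω * X = X * ω := by
      have e : (ω * (X * ω⁻¹)) * ω = ω * X := by rw [mul_assoc, h1]
      rw [← e, hcomm _ hY, h1]
    have hSX : S * X = X * S := stmt15_sqrt_comm hω hXω
    have hSω : S * ω = ω * S := by rw [← hSS, ← mul_assoc]
    have hSωinv : S * ω⁻¹ = ω⁻¹ * S := by
      have e : ω⁻¹ * ((ω * S) * ω⁻¹) = ω⁻¹ * ((S * ω) * ω⁻¹) := by rw [hSω]
      calc S * ω⁻¹ = (ω⁻¹ * ω) * (S * ω⁻¹) := by rw [hinv2, one_mul]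
        _ = ω⁻¹ * ((ω * S) * ω⁻¹) := by noncomm_ring
        _ = ω⁻¹ * ((S * ω) * ω⁻¹) := e
        _ = ω⁻¹ * (S * (ω * ω⁻¹)) := by noncomm_ring
        _ = ω⁻¹ * S := by rw [hωinv, mul_one]
    have hwinvh : (ω⁻¹ : Mat n)ᴴ = ω⁻¹ := by
      rw [Matrix.conjTranspose_nonsing_inv, hω.1.eq]
    have hkey : S * ω⁻¹ * X * S = X := by
      calc S * ω⁻¹ * X * S = ω⁻¹ * (S * X) * S := by rw [hSωinv, mul_assoc ω⁻¹ S X]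
        _ = ω⁻¹ * (X * S) * S := by rw [hSX]
        _ = ω⁻¹ * (X * ω) := by rw [mul_assoc, mul_assoc, hSS]
        _ = ω⁻¹ * (ω * X) := by rw [hXω]
        _ = X := by rw [← mul_assoc, hinv2, one_mul]
    set M := P (S * B * S) with hMdef
    calc ((X * M).trace).re
        = ((Xᴴ * M).trace).re := by rw [hXh]
      _ = (((P X)ᴴ * M).trace).re := by
          have hsplit : Xᴴ * M = (P X)ᴴ * M + (X - P X)ᴴ * M := by
            rw [← add_mul, ← conjTranspose_add, add_sub_cancel]
          have hperp : (((X - P X)ᴴ * M).trace).re = 0 := by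
            rw [stmt15_re_tr_symm]
            exact hPorth _ (hPmem _) X
          rw [hsplit, trace_add, Complex.add_re, hperp, add_zero]
      _ = (((X * ω⁻¹)ᴴ * M).trace).re := by rw [hPX]
      _ = (((X * ω⁻¹)ᴴ * (S * B * S)).trace).re := hPE _ hY _
      _ = ((X * B).trace).re := by
          have h5 : (X * ω⁻¹)ᴴ * (S * B * S) = (ω⁻¹ * X * S * B) * S := by
            rw [conjTranspose_mul, hwinvh, hXh]
            noncomm_ring
          have h6 : S * (ω⁻¹ * X * S * B) = X * B := by
            rw [show S * (ω⁻¹ * X * S * B) = (S * ω⁻¹ * X * S) * B from by noncomm_ring, hkey]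
          rw [h5, trace_mul_comm, h6]
end
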